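/- arXiv:2107.13123 — 6 statements merged into one kernel-verified Lean document; each statement's English description precedes it below -/
import Mathlib

section
/- Let W be a square-free word, and suppose (a, ℓ, b, c) and (a', ℓ', b', c') are square-completing quadruples in W with the same sign. Then at least one of the following holds: (1) one of the quantities |a − a'|, |b − b'|, |ℓ − ℓ'| is at least L/5 − 2, where L = max(ℓ, ℓ'); or (2) b = b' and c = c'. -/
/-- A word is square-free if it contains no factor of the form `X ++ X` with `X` nonempty. -/
def SquareFree {α : Type*} (W : List α) : Prop :=
  ∀ X : List α, X ≠ [] → ¬ (X ++ X) <:+: W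

/-- `W'` is an extension of `W` if it is obtained by inserting a single letter into `W`. -/
def IsExtension {α : Type*} (W W' : List α) : Prop :=
  ∃ (W₁ W₂ : List α) (x : α), W = W₁ ++ W₂ ∧ W' = W₁ ++ [x] ++ W₂

/-- A square-free word is extremal square-free if none of its extensions is square-free. -/
def ExtremalSquareFree {α : Type*} (W : List α) : Prop :=
  SquareFree W ∧ ∀ W', IsExtension W W' → ¬ SquareFree W'
/-- The factor `W[a, b)` of `W`, consisting of the letters `a, a+1, …, b-1`
(letters are numbered from 1). -/
def factor {α : Type*} (W : List α) (a b : ℕ) : List α :=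
  (W.drop (a - 1)).take (b - a)

/-- The quadruple `(a, ℓ, b, c)` is square-completing in `W` if, in the word `W +_b c`
obtained by inserting the letter `c` at gap `b` of `W`, the factors `[a, a+ℓ)` and
`[a+ℓ, a+2ℓ)` are equal (so they form a square of length `2ℓ`). -/
def SquareCompleting {α : Type*} (W : List α) (a ℓ b : ℕ) (c : α) : Prop :=
  1 ≤ a ∧ 1 ≤ ℓ ∧ a ≤ b + 1 ∧ b ≤ W.length ∧ a + 2 * ℓ ≤ W.length + 2 ∧
    factor (W.insertIdx b c) a (a + ℓ) = factor (W.insertIdx b c) (a + ℓ) (a + 2 * ℓ)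

/-- The sign of a square-completing quadruple: `1` if `b ≤ a + ℓ - 2`
(the inserted letter lies in the first half of the square), and `-1` if `b ≥ a + ℓ - 1`. -/
def scSign (a ℓ b : ℕ) : ℤ :=
  if b + 2 ≤ a + ℓ then 1 else -1

section Aux

variable {α : Type*}

/-- A run of `s` consecutive shift-`s` equalities yields a square, contradicting
square-freeness. -/
lemma scfos_run_square {W : List α} (hW : SquareFree W) (i0 s : ℕ)
    (hs : 1 ≤ s) (hr : i0 + 2*s ≤ W.length)
    (h : ∀ i, i0 ≤ i → i < i0 + s → W[i]? = W[i+s]?) : False := by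
  set X := (W.drop i0).take s with hX
  have hlen : X.length = s := by
    simp only [hX, List.length_take, List.length_drop]
    omega
  have hXX : X ++ X = (W.drop i0).take (2*s) := by
    apply List.ext_getElem?
    intro k
    rw [List.getElem?_append, hlen]
    by_cases hk : k < s
    · rw [if_pos (by omega)]
      rw [hX, List.getElem?_take, List.getElem?_take, if_pos hk, if_pos (by omega)]
    · rw [if_neg (by omega)]
      by_cases hk2 : k < 2*s
      · rw [hX, List.getElem?_take, List.getElem?_take, if_pos (by omega), if_pos hk2,
          List.getElem?_drop, List.getElem?_drop]
        have := h (i0 + (k - s)) (by omega) (by omega)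
        rw [show i0 + (k-s) + s = i0 + k from by omega] at this
        exact this
      · rw [hX, List.getElem?_take, List.getElem?_take, if_neg (by omega), if_neg (by omega)]
  have hinf : X ++ X <:+: W := by
    rw [hXX]
    exact ((List.take_prefix _ _).isInfix).trans ((List.drop_suffix i0 W).isInfix)
  refine hW X ?_ hinf
  intro h0
  rw [h0] at hlen
  simp at hlen
  omega

lemma scfos_ins_lt {W : List α} {b k : ℕ} {c : α} (hb : b ≤ W.length) (hk : k < b) :
    (W.insertIdx b c)[k]? = W[k]? := by
  have hk2 : k < W.length := lt_of_lt_of_le hk hb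
  have hk3 : k < (W.insertIdx b c).length := by
    rw [List.length_insertIdx_of_le_length hb]; omega
  rw [List.getElem?_eq_getElem hk3, List.getElem?_eq_getElem hk2]
  rw [List.getElem_insertIdx_of_lt hk hk3]

lemma scfos_ins_self {W : List α} {b : ℕ} {c : α} (hb : b ≤ W.length) :
    (W.insertIdx b c)[b]? = some c := by
  have hb3 : b < (W.insertIdx b c).length := by
    rw [List.length_insertIdx_of_le_length hb]; omega
  rw [List.getElem?_eq_getElem hb3]
  rw [List.getElem_insertIdx_self hb3]

lemma scfos_ins_gt {W : List α} {b k : ℕ} {c : α} (hb : b ≤ W.length) (hk : b ≤ k)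
    (hk2 : k < W.length) : (W.insertIdx b c)[k+1]? = W[k]? := by
  obtain ⟨j, rfl⟩ : ∃ j, k = b + j := ⟨k - b, by omega⟩
  have hk3 : b + j + 1 < (W.insertIdx b c).length := by
    rw [List.length_insertIdx_of_le_length hb]; omega
  rw [List.getElem?_eq_getElem hk3, List.getElem?_eq_getElem hk2]
  exact congrArg some (List.getElem_insertIdx_add_succ W c b j hk2)

end Aux

section Struct

variable {α : Type*}

/-- Pointwise form of the square condition. -/
lemma scfos_point {W : List α} {A p b : ℕ} {c : α}
    (h : SquareCompleting W (A+1) (p+1) b c) :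
    ∀ k, k ≤ p → (W.insertIdx b c)[A+k]? = (W.insertIdx b c)[A+p+1+k]? := by
  obtain ⟨-, -, -, -, -, h6⟩ := h
  intro k hk
  have h6' : ((W.insertIdx b c).drop A).take (p+1)
      = ((W.insertIdx b c).drop (A+p+1)).take (p+1) := by
    have e1 : A + 1 - 1 = A := by omega
    have e2 : A + 1 + (p+1) - (A+1) = p + 1 := by omega
    have e3 : A + 1 + (p+1) - 1 = A + p + 1 := by omega
    have e4 : A + 1 + 2*(p+1) - (A+1+(p+1)) = p + 1 := by omega
    simpa only [factor, e1, e2, e3, e4] using h6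
  have := congrArg (fun l => l[k]?) h6'
  simpa only [List.getElem?_take, List.getElem?_drop, if_pos (show k < p + 1 by omega)]
    using this

lemma scfos_structPlus {W : List α} {A p b : ℕ} {c : α}
    (h : SquareCompleting W (A+1) (p+1) b c) (hsign : b + 2 ≤ (A+1) + (p+1)) :
    A ≤ b ∧ b ≤ A + p ∧ A + 2*p + 1 ≤ W.length ∧
    (∀ m, A ≤ m → m + 1 ≤ b → W[m]? = W[m+p]?) ∧
    (∀ m, b ≤ m → m + 1 ≤ A + p → W[m]? = W[m+p+1]?) ∧
    W[b+p]? = some c := by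
  have key := scfos_point h
  obtain ⟨-, -, h3, h4, h5, -⟩ := h
  have hAb : A ≤ b := by omega
  have hbA : b ≤ A + p := by omega
  have hn : A + 2*p + 1 ≤ W.length := by omega
  have keyR : ∀ k, k ≤ p → (W.insertIdx b c)[A+k]? = W[A+p+k]? := by
    intro k hk
    rw [key k hk, show A+p+1+k = (A+p+k)+1 from by omega]
    exact scfos_ins_gt h4 (by omega) (by omega)
  refine ⟨hAb, hbA, hn, ?_, ?_, ?_⟩
  · intro m hm1 hm2
    have := keyR (m - A) (by omega)
    rw [show A + (m - A) = m from by omega, show A + p + (m - A) = m + p from by omega] at this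
    rw [← this]
    exact (scfos_ins_lt h4 (by omega)).symm
  · intro m hm1 hm2
    have := keyR (m + 1 - A) (by omega)
    rw [show A + (m + 1 - A) = m + 1 from by omega,
      show A + p + (m + 1 - A) = m + p + 1 from by omega] at this
    rw [← this]
    exact (scfos_ins_gt h4 (by omega) (by omega)).symm
  · have := keyR (b - A) (by omega)
    rw [show A + (b - A) = b from by omega, show A + p + (b - A) = b + p from by omega] at this
    rw [← this]
    exact scfos_ins_self h4

lemma scfos_structMinus {W : List α} (hW : SquareFree W) {A p b : ℕ} {c : α}
    (h : SquareCompleting W (A+1) (p+1) b c) (hsign : ¬ (b + 2 ≤ (A+1) + (p+1))) :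
    ∃ H, A ≤ H ∧ H ≤ A + p ∧ b = H + p + 1 ∧ A + 2*p + 1 ≤ W.length ∧
    (∀ m, A ≤ m → m + 1 ≤ H → W[m]? = W[m+p+1]?) ∧
    (∀ m, H + 1 ≤ m → m ≤ A + p → W[m]? = W[m+p]?) ∧
    W[H]? = some c := by
  have key := scfos_point h
  obtain ⟨-, -, h3, h4, h5, -⟩ := h
  have hb1 : A + p + 1 ≤ b := by omega
  -- first: b ≤ A + 2p + 1
  have hb2 : b ≤ A + 2*p + 1 := by
    by_contra hb2
    refine scfos_run_square hW A (p+1) (by omega) (by omega) ?_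
    intro i hi1 hi2
    have := key (i - A) (by omega)
    rw [show A + (i - A) = i from by omega,
      show A + p + 1 + (i - A) = i + (p+1) from by omega] at this
    rw [← scfos_ins_lt h4 (show i < b by omega), ← scfos_ins_lt h4 (show i+(p+1) < b by omega)]
    exact this
  refine ⟨b - p - 1, by omega, by omega, by omega, by omega, ?_, ?_, ?_⟩
  · intro m hm1 hm2
    have := key (m - A) (by omega)
    rw [show A + (m - A) = m from by omega,
      show A + p + 1 + (m - A) = m + p + 1 from by omega] at this
    rw [← scfos_ins_lt h4 (show m < b by omega), ← scfos_ins_lt h4 (show m+p+1 < b by omega)]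
    exact this
  · intro m hm1 hm2
    have := key (m - A) (by omega)
    rw [show A + (m - A) = m from by omega,
      show A + p + 1 + (m - A) = (m + p) + 1 from by omega] at this
    rw [← scfos_ins_lt h4 (show m < b by omega), ← scfos_ins_gt h4 (by omega) (by omega)]
    exact this
  · have := key (b - p - 1 - A) (by omega)
    rw [show A + (b - p - 1 - A) = b - p - 1 from by omega,
      show A + p + 1 + (b - p - 1 - A) = b from by omega] at this
    rw [scfos_ins_lt h4 (show b - p - 1 < b by omega), scfos_ins_self h4] at this
    exact this

end Struct

section Core

variable {α : Type*}

/-- Core, sign `+1`, equal lengths, distinct gaps: impossible. -/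
lemma scfos_corePlus0 {W : List α} (hW : SquareFree W) {A K A' K' p : ℕ}
    (hn : A + 2*p + 1 ≤ W.length) (hn' : A' + 2*p + 1 ≤ W.length)
    (hK1 : A ≤ K) (hK2 : K + 1 ≤ A + p)
    (hK1' : A' ≤ K') (hK2' : K' + 1 ≤ A' + p)
    (ha1 : 5*A + 11 ≤ p + 1 + 5*A') (ha2 : 5*A' + 11 ≤ p + 1 + 5*A)
    (S2 : ∀ m, K ≤ m → m + 1 ≤ A + p → W[m]? = W[m+p+1]?)
    (S1' : ∀ m, A' ≤ m → m + 1 ≤ K' → W[m]? = W[m+p]?)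
    (S2' : ∀ m, K' ≤ m → m + 1 ≤ A' + p → W[m]? = W[m+p+1]?)
    (hKK : K + 1 ≤ K') : False := by
  by_cases hpt : K' ≤ A ⊔ A'
  · have hfacts : K' = A' ∧ K + 1 ≤ A' := by
      rcases max_choice A A' with h | h <;> omega
    obtain ⟨hKA', hKA⟩ := hfacts
    refine scfos_run_square hW K (p+1) (by omega) (by omega) ?_
    intro i hi1 hi2
    by_cases hi : i + 1 ≤ A + p
    · exact S2 i (by omega) hi
    · exact S2' i (by omega) (by omega)
  · push_neg at hpt
    have hu1 : A < K' := lt_of_le_of_lt (le_max_left A A') hpt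
    have hu2 : A' < K' := lt_of_le_of_lt (le_max_right A A') hpt
    set m := (A ⊔ A') ⊔ K with hm
    have hmA : A ≤ m := le_trans (le_max_left A A') (le_max_left _ _)
    have hmA' : A' ≤ m := le_trans (le_max_right A A') (le_max_left _ _)
    have hmK : K ≤ m := le_max_right _ _
    have hmK' : m + 1 ≤ K' := by
      rcases max_choice (A ⊔ A') K with h | h <;> rcases max_choice A A' with h2 | h2 <;> omega
    have hmtop : m + 1 ≤ A + p := by
      rcases max_choice (A ⊔ A') K with h | h <;> rcases max_choice A A' with h2 | h2 <;> omega
    have e2 := S2 m (by omega) hmtop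
    have e1 := S1' m hmA' hmK'
    refine scfos_run_square hW (m+p) 1 le_rfl (by omega) ?_
    intro i hi1 hi2
    have hieq : i = m + p := by omega
    subst hieq
    rw [← e1, e2]

/-- Core, sign `-1`, equal lengths, distinct holes: impossible. -/
lemma scfos_coreMinus0 {W : List α} (hW : SquareFree W) {A H A' H' p : ℕ}
    (hn : A + 2*p + 1 ≤ W.length) (hn' : A' + 2*p + 1 ≤ W.length)
    (hH1 : A + 1 ≤ H) (hH2 : H ≤ A + p)
    (hH1' : A' + 1 ≤ H') (hH2' : H' ≤ A' + p)
    (ha1 : 5*A + 11 ≤ p + 1 + 5*A') (ha2 : 5*A' + 11 ≤ p + 1 + 5*A)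
    (T1 : ∀ m, A ≤ m → m + 1 ≤ H → W[m]? = W[m+p+1]?)
    (T2 : ∀ m, H + 1 ≤ m → m ≤ A + p → W[m]? = W[m+p]?)
    (T1' : ∀ m, A' ≤ m → m + 1 ≤ H' → W[m]? = W[m+p+1]?)
    (hHH : H + 1 ≤ H') : False := by
  by_cases hesc : H + 1 ≤ A + p
  · set m1 := H ⊔ A' with hm1
    have hma : H ≤ m1 := le_max_left _ _
    have hmb : A' ≤ m1 := le_max_right _ _
    have hm1H' : m1 + 1 ≤ H' := by
      rcases max_choice H A' with h | h <;> omega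
    have hm1top : m1 + 1 ≤ A + p := by
      rcases max_choice H A' with h | h <;> omega
    have e1 := T1' m1 hmb hm1H'
    have e2 := T2 (m1+1) (by omega) hm1top
    have e2' : W[m1+1]? = W[m1+p+1]? := by
      rw [e2, show m1+1+p = m1+p+1 from by omega]
    refine scfos_run_square hW m1 1 le_rfl (by omega) ?_
    intro i hi1 hi2
    have hieq : i = m1 := by omega
    subst hieq
    exact e1.trans e2'.symm
  · have hHA : H = A + p := by omega
    have hAA' : A + 1 ≤ A' := by omega
    refine scfos_run_square hW A (p+1) (by omega) (by omega) ?_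
    intro i hi1 hi2
    by_cases hi : i + 1 ≤ H
    · exact T1 i (by omega) hi
    · exact T1' i (by omega) (by omega)

/-- Core lemma, sign `+1`. -/
lemma scfos_corePlus {W : List α} (hW : SquareFree W) {A K p A' K' q : ℕ}
    (hqp : q ≤ p)
    (hn : A + 2*p + 1 ≤ W.length) (hn' : A' + 2*q + 1 ≤ W.length)
    (hK1 : A ≤ K) (hK2 : K ≤ A + p) (hK1' : A' ≤ K') (hK2' : K' ≤ A' + q)
    (ha1 : 5*A + 11 ≤ p + 1 + 5*A') (ha2 : 5*A' + 11 ≤ p + 1 + 5*A)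
    (hb1 : 5*K + 11 ≤ p + 1 + 5*K') (hb2 : 5*K' + 11 ≤ p + 1 + 5*K)
    (hd : 5*p + 11 ≤ p + 1 + 5*q)
    (S1 : ∀ m, A ≤ m → m + 1 ≤ K → W[m]? = W[m+p]?)
    (S2 : ∀ m, K ≤ m → m + 1 ≤ A + p → W[m]? = W[m+p+1]?)
    (S1' : ∀ m, A' ≤ m → m + 1 ≤ K' → W[m]? = W[m+q]?)
    (S2' : ∀ m, K' ≤ m → m + 1 ≤ A' + q → W[m]? = W[m+q+1]?) :
    p = q ∧ K = K' := by
  have hq10 : 10 ≤ q := by omega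
  have hK2s : K + 1 ≤ A + p := by
    by_contra h0
    exact scfos_run_square hW A p (by omega) (by omega)
      (fun i hi1 hi2 => S1 i hi1 (by omega))
  have hK2s' : K' + 1 ≤ A' + q := by
    by_contra h0
    exact scfos_run_square hW A' q (by omega) (by omega)
      (fun i hi1 hi2 => S1' i hi1 (by omega))
  rcases Nat.eq_or_lt_of_le hqp with hEq | hLt
  · subst hEq
    refine ⟨rfl, ?_⟩
    by_contra hKK
    rcases Nat.lt_or_ge K K' with h | h
    · exact scfos_corePlus0 hW hn hn' hK1 hK2s hK1' hK2s' ha1 ha2 S2 S1' S2' h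
    · exact scfos_corePlus0 hW hn' hn hK1' hK2s' hK1 hK2s ha2 ha1 S2' S1 S2 (by omega)
  · exfalso
    by_cases hSq1 : (A ⊔ A') + (p - q) ≤ K ⊓ K'
    · have hu1 : A ≤ A ⊔ A' := le_max_left _ _
      have hu2 : A' ≤ A ⊔ A' := le_max_right _ _
      have hcond1 : (A ⊔ A') + (p - q) ≤ K := le_trans hSq1 (min_le_left _ _)
      have hcond2 : (A ⊔ A') + (p - q) ≤ K' := le_trans hSq1 (min_le_right _ _)
      have huB : (A ⊔ A') + p + (p - q) ≤ A + 2*p := by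
        rcases max_choice A A' with h | h <;> omega
      refine scfos_run_square hW ((A ⊔ A') + q) (p - q) (by omega) (by omega) ?_
      intro i hi1 hi2
      obtain ⟨m, rfl⟩ : ∃ m, i = m + q := ⟨i - q, by omega⟩
      have e1 := S1' m (by omega) (by omega)
      have e2 := S1 m (by omega) (by omega)
      rw [← e1, e2, show m + q + (p - q) = m + p from by omega]
    · by_cases hSq2 : (K ⊔ K') + (p - q) ≤ (A + p) ⊓ (A' + q)
      · have hw1 : K ≤ K ⊔ K' := le_max_left _ _
        have hw2 : K' ≤ K ⊔ K' := le_max_right _ _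
        have hcond1 : (K ⊔ K') + (p - q) ≤ A + p := le_trans hSq2 (min_le_left _ _)
        have hcond2 : (K ⊔ K') + (p - q) ≤ A' + q := le_trans hSq2 (min_le_right _ _)
        refine scfos_run_square hW ((K ⊔ K') + q + 1) (p - q) (by omega) (by omega) ?_
        intro i hi1 hi2
        obtain ⟨m, rfl⟩ : ∃ m, i = m + q + 1 := ⟨i - q - 1, by omega⟩
        have e1 := S2' m (by omega) (by omega)
        have e2 := S2 m (by omega) (by omega)
        rw [← e1, e2, show m + q + 1 + (p - q) = m + p + 1 from by omega]
      · rcases max_choice A A' with h1 | h1 <;> rcases min_choice K K' with h2 | h2 <;>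
          rcases max_choice K K' with h3 | h3 <;>
          rcases min_choice (A+p) (A'+q) with h4 | h4 <;> omega

/-- Core lemma, sign `-1`. -/
lemma scfos_coreMinus {W : List α} (hW : SquareFree W) {A H p A' H' q : ℕ}
    (hqp : q ≤ p)
    (hn : A + 2*p + 1 ≤ W.length) (hn' : A' + 2*q + 1 ≤ W.length)
    (hH1 : A ≤ H) (hH2 : H ≤ A + p) (hH1' : A' ≤ H') (hH2' : H' ≤ A' + q)
    (ha1 : 5*A + 11 ≤ p + 1 + 5*A') (ha2 : 5*A' + 11 ≤ p + 1 + 5*A)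
    (hb1 : 5*(H+p) + 11 ≤ p + 1 + 5*(H'+q)) (hb2 : 5*(H'+q) + 11 ≤ p + 1 + 5*(H+p))
    (hd : 5*p + 11 ≤ p + 1 + 5*q)
    (T1 : ∀ m, A ≤ m → m + 1 ≤ H → W[m]? = W[m+p+1]?)
    (T2 : ∀ m, H + 1 ≤ m → m ≤ A + p → W[m]? = W[m+p]?)
    (T1' : ∀ m, A' ≤ m → m + 1 ≤ H' → W[m]? = W[m+q+1]?)
    (T2' : ∀ m, H' + 1 ≤ m → m ≤ A' + q → W[m]? = W[m+q]?) :
    p = q ∧ H = H' := by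
  have hq10 : 10 ≤ q := by omega
  have hH1s : A + 1 ≤ H := by
    by_contra h0
    exact scfos_run_square hW (A+1) p (by omega) (by omega)
      (fun i hi1 hi2 => T2 i (by omega) (by omega))
  have hH1s' : A' + 1 ≤ H' := by
    by_contra h0
    exact scfos_run_square hW (A'+1) q (by omega) (by omega)
      (fun i hi1 hi2 => T2' i (by omega) (by omega))
  rcases Nat.eq_or_lt_of_le hqp with hEq | hLt
  · subst hEq
    refine ⟨rfl, ?_⟩
    by_contra hHH
    rcases Nat.lt_or_ge H H' with h | h
    · exact scfos_coreMinus0 hW hn hn' hH1s hH2 hH1s' hH2' ha1 ha2 T1 T2 T1' h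
    · exact scfos_coreMinus0 hW hn' hn hH1s' hH2' hH1s hH2 ha2 ha1 T1' T2' T1 (by omega)
  · exfalso
    by_cases hF1 : (A ⊔ A') + (p - q) ≤ H ⊓ H'
    · have hu1 : A ≤ A ⊔ A' := le_max_left _ _
      have hu2 : A' ≤ A ⊔ A' := le_max_right _ _
      have hcond1 : (A ⊔ A') + (p - q) ≤ H := le_trans hF1 (min_le_left _ _)
      have hcond2 : (A ⊔ A') + (p - q) ≤ H' := le_trans hF1 (min_le_right _ _)
      have huB : (A ⊔ A') + (p - q) ≤ A + p := by
        rcases max_choice A A' with h | h <;> omega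
      refine scfos_run_square hW ((A ⊔ A') + q + 1) (p - q) (by omega) (by omega) ?_
      intro i hi1 hi2
      obtain ⟨m, rfl⟩ : ∃ m, i = m + q + 1 := ⟨i - q - 1, by omega⟩
      have e1 := T1' m (by omega) (by omega)
      have e2 := T1 m (by omega) (by omega)
      rw [← e1, e2, show m + q + 1 + (p - q) = m + p + 1 from by omega]
    · by_cases hF2 : (H ⊔ H') + (p - q) ≤ (A + p) ⊓ (A' + q)
      · have hw1 : H ≤ H ⊔ H' := le_max_left _ _
        have hw2 : H' ≤ H ⊔ H' := le_max_right _ _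
        have hcond1 : (H ⊔ H') + (p - q) ≤ A + p := le_trans hF2 (min_le_left _ _)
        have hcond2 : (H ⊔ H') + (p - q) ≤ A' + q := le_trans hF2 (min_le_right _ _)
        refine scfos_run_square hW ((H ⊔ H') + 1 + q) (p - q) (by omega) (by omega) ?_
        intro i hi1 hi2
        obtain ⟨m, rfl⟩ : ∃ m, i = m + q := ⟨i - q, by omega⟩
        have e1 := T2' m (by omega) (by omega)
        have e2 := T2 m (by omega) (by omega)
        rw [← e1, e2, show m + q + (p - q) = m + p from by omega]
      · by_cases hd2 : q + 2 ≤ p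
        · by_cases hC3 : ((H+1) ⊔ A') + (p - q) ≤ A + p + 2 ∧ ((H+1) ⊔ A') + (p - q) ≤ H' + 1
          · obtain ⟨hC3a, hC3b⟩ := hC3
            have hl1 : H + 1 ≤ (H+1) ⊔ A' := le_max_left _ _
            have hl2 : A' ≤ (H+1) ⊔ A' := le_max_right _ _
            refine scfos_run_square hW (((H+1) ⊔ A') + q + 1) (p - q - 1) (by omega)
              (by omega) ?_
            intro i hi1 hi2
            obtain ⟨m, rfl⟩ : ∃ m, i = m + q + 1 := ⟨i - q - 1, by omega⟩
            have e1 := T2 m (by omega) (by omega)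
            have e2 := T1' m (by omega) (by omega)
            rw [← e2, e1, show m + q + 1 + (p - q - 1) = m + p from by omega]
          · rcases max_choice A A' with h1 | h1 <;> rcases min_choice H H' with h2 | h2 <;>
              rcases max_choice H H' with h3 | h3 <;>
              rcases min_choice (A+p) (A'+q) with h4 | h4 <;>
              rcases max_choice (H+1) A' with h5 | h5 <;> omega
        · rcases max_choice A A' with h1 | h1 <;> rcases min_choice H H' with h2 | h2 <;>
            rcases max_choice H H' with h3 | h3 <;>
            rcases min_choice (A+p) (A'+q) with h4 | h4 <;> omega

end Core

lemma scfos_small {x y M : ℕ} (h : ¬((M:ℝ)/5 - 2 ≤ |(x:ℝ) - (y:ℝ)|)) :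
    5*x + 11 ≤ M + 5*y ∧ 5*y + 11 ≤ M + 5*x := by
  push_neg at h
  obtain ⟨h1, h2⟩ := abs_lt.mp h
  have k1 : (5*x + 10 : ℝ) < M + 5*y := by linarith
  have k2 : (5*y + 10 : ℝ) < M + 5*x := by linarith
  have k1' : ((5*x + 10 : ℕ) : ℝ) < ((M + 5*y : ℕ) : ℝ) := by push_cast; linarith
  have k2' : ((5*y + 10 : ℕ) : ℝ) < ((M + 5*x : ℕ) : ℝ) := by push_cast; linarith
  have := Nat.cast_lt (α := ℝ) |>.mp k1'
  have := Nat.cast_lt (α := ℝ) |>.mp k2'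
  omega


/-- Key proposition, first part: two square-completing quadruples in a square-free word with
the same sign either have one of `a, b, ℓ` differing by at least `L/5 - 2` (where
`L = max(ℓ, ℓ')`), or they share the same gap and inserted letter. -/
theorem square_completing_far_or_same {α : Type*} (W : List α) (hW : SquareFree W)
    (a ℓ b : ℕ) (c : α) (a' ℓ' b' : ℕ) (c' : α)
    (h : SquareCompleting W a ℓ b c) (h' : SquareCompleting W a' ℓ' b' c')
    (hsign : scSign a ℓ b = scSign a' ℓ' b') :
    ((max ℓ ℓ' : ℝ) / 5 - 2 ≤ |(a : ℝ) - (a' : ℝ)| ∨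
     (max ℓ ℓ' : ℝ) / 5 - 2 ≤ |(b : ℝ) - (b' : ℝ)| ∨
     (max ℓ ℓ' : ℝ) / 5 - 2 ≤ |(ℓ : ℝ) - (ℓ' : ℝ)|) ∨
    (b = b' ∧ c = c') := by
  by_cases hc1 : (max ℓ ℓ' : ℝ) / 5 - 2 ≤ |(a : ℝ) - (a' : ℝ)|
  · exact Or.inl (Or.inl hc1)
  by_cases hc2 : (max ℓ ℓ' : ℝ) / 5 - 2 ≤ |(b : ℝ) - (b' : ℝ)|
  · exact Or.inl (Or.inr (Or.inl hc2))
  by_cases hc3 : (max ℓ ℓ' : ℝ) / 5 - 2 ≤ |(ℓ : ℝ) - (ℓ' : ℝ)|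
  · exact Or.inl (Or.inr (Or.inr hc3))
  right
  have hcast : ((max ℓ ℓ' : ℕ) : ℝ) = (max ℓ ℓ' : ℝ) := by push_cast; rfl
  have hsa : 5*a + 11 ≤ max ℓ ℓ' + 5*a' ∧ 5*a' + 11 ≤ max ℓ ℓ' + 5*a :=
    scfos_small (by rw [hcast]; exact hc1)
  have hsb : 5*b + 11 ≤ max ℓ ℓ' + 5*b' ∧ 5*b' + 11 ≤ max ℓ ℓ' + 5*b :=
    scfos_small (by rw [hcast]; exact hc2)
  have hsl : 5*ℓ + 11 ≤ max ℓ ℓ' + 5*ℓ' ∧ 5*ℓ' + 11 ≤ max ℓ ℓ' + 5*ℓ :=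
    scfos_small (by rw [hcast]; exact hc3)
  have ha1 := h.1
  have hl1 := h.2.1
  have ha1' := h'.1
  have hl1' := h'.2.1
  obtain ⟨A, rfl⟩ : ∃ A, a = A + 1 := ⟨a - 1, by omega⟩
  obtain ⟨p, rfl⟩ : ∃ p, ℓ = p + 1 := ⟨ℓ - 1, by omega⟩
  obtain ⟨A', rfl⟩ : ∃ A', a' = A' + 1 := ⟨a' - 1, by omega⟩
  obtain ⟨q, rfl⟩ : ∃ q, ℓ' = q + 1 := ⟨ℓ' - 1, by omega⟩
  unfold scSign at hsign
  by_cases s1 : b + 2 ≤ (A+1) + (p+1) <;> by_cases s2 : b' + 2 ≤ (A'+1) + (q+1) <;>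
    simp only [if_pos, if_neg, s1, s2, ite_true, ite_false] at hsign
  · -- both sign +1
    obtain ⟨hAb, hbA, hn, S1, S2, S3⟩ := scfos_structPlus h s1
    obtain ⟨hAb', hbA', hn', S1', S2', S3'⟩ := scfos_structPlus h' s2
    rcases le_total (q+1) (p+1) with hll | hll
    · have hM : max (p+1) (q+1) = p + 1 := max_eq_left hll
      rw [hM] at hsa hsb hsl
      obtain ⟨hpq, hKK⟩ := scfos_corePlus hW (by omega) hn hn' hAb hbA hAb' hbA'
        (by omega) (by omega) (by omega) (by omega) (by omega) S1 S2 S1' S2'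
      refine ⟨hKK, ?_⟩
      have : W[b+p]? = W[b'+q]? := by rw [hKK, hpq]
      rw [S3, S3'] at this
      exact Option.some.inj this
    · have hM : max (p+1) (q+1) = q + 1 := max_eq_right hll
      rw [hM] at hsa hsb hsl
      obtain ⟨hpq, hKK⟩ := scfos_corePlus hW (by omega) hn' hn hAb' hbA' hAb hbA
        (by omega) (by omega) (by omega) (by omega) (by omega) S1' S2' S1 S2
      refine ⟨hKK.symm, ?_⟩
      have : W[b+p]? = W[b'+q]? := by rw [hKK, hpq]
      rw [S3, S3'] at this
      exact Option.some.inj this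
  · exact absurd hsign (by norm_num)
  · exact absurd hsign (by norm_num)
  · -- both sign -1
    obtain ⟨H, hH1, hH2, hbH, hn, T1, T2, T3⟩ := scfos_structMinus hW h s1
    obtain ⟨H', hH1', hH2', hbH', hn', T1', T2', T3'⟩ := scfos_structMinus hW h' s2
    rcases le_total (q+1) (p+1) with hll | hll
    · have hM : max (p+1) (q+1) = p + 1 := max_eq_left hll
      rw [hM] at hsa hsb hsl
      obtain ⟨hpq, hHH⟩ := scfos_coreMinus hW (by omega) hn hn' hH1 hH2 hH1' hH2'
        (by omega) (by omega) (by omega) (by omega) (by omega) T1 T2 T1' T2'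
      refine ⟨by omega, ?_⟩
      have : W[H]? = W[H']? := by rw [hHH]
      rw [T3, T3'] at this
      exact Option.some.inj this
    · have hM : max (p+1) (q+1) = q + 1 := max_eq_right hll
      rw [hM] at hsa hsb hsl
      obtain ⟨hpq, hHH⟩ := scfos_coreMinus hW (by omega) hn' hn hH1' hH2' hH1 hH2
        (by omega) (by omega) (by omega) (by omega) (by omega) T1' T2' T1 T2
      refine ⟨by omega, ?_⟩
      have : W[H]? = W[H']? := by rw [hHH]
      rw [T3, T3'] at this
      exact Option.some.inj this
end

section
/- Let W be a square-free word, and suppose (a, ℓ, b, c) and (a', ℓ, b', c') are square-completing quadruples in W with the same sign and the same length parameter ℓ. Then at least one of the following holds: (1) |a − a'| ≥ ℓ − 1; or (2) b = b' and c = c'. -/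
section Aux

variable {α : Type*}

lemma insertIdx_getElem?_lt {W : List α} {b i : ℕ} (c : α) (hb : b ≤ W.length) (hib : i < b) :
    (W.insertIdx b c)[i]? = W[i]? := by
  have h1 : i < W.length := lt_of_lt_of_le hib hb
  have h2 : i < (W.insertIdx b c).length := by rw [List.length_insertIdx_of_le_length hb]; omega
  rw [List.getElem?_eq_getElem h2, List.getElem?_eq_getElem h1,
    List.getElem_insertIdx_of_lt hib h2]

lemma insertIdx_getElem?_self {W : List α} {b : ℕ} (c : α) (hb : b ≤ W.length) :
    (W.insertIdx b c)[b]? = some c := by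
  have h2 : b < (W.insertIdx b c).length := by rw [List.length_insertIdx_of_le_length hb]; omega
  rw [List.getElem?_eq_getElem h2, List.getElem_insertIdx_self h2]

lemma insertIdx_getElem?_gt {W : List α} {b i : ℕ} (c : α) (hbi : b ≤ i) (hi : i < W.length) :
    (W.insertIdx b c)[i + 1]? = W[i]? := by
  obtain ⟨k, rfl⟩ : ∃ k, i = b + k := ⟨i - b, by omega⟩
  have hb : b ≤ W.length := by omega
  have h2 : b + k + 1 < (W.insertIdx b c).length := by rw [List.length_insertIdx_of_le_length hb]; omega
  rw [List.getElem?_eq_getElem h2, List.getElem?_eq_getElem hi,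
    List.getElem_insertIdx_add_succ W c b k hi]

/-- A square-free word has no factor of period `p` and length `2p`. -/
lemma no_period {W : List α} (hW : SquareFree W) (s p : ℕ) (hp : 1 ≤ p)
    (hle : s + 2 * p ≤ W.length) (h : ∀ j, j < p → W[s + j]? = W[s + p + j]?) : False := by
  have hdup : (W.drop (s + p)).take p = (W.drop s).take p := by
    apply List.ext_getElem?
    intro j
    rw [List.getElem?_take, List.getElem?_take, List.getElem?_drop, List.getElem?_drop]
    by_cases hj : j < p
    · rw [if_pos hj, if_pos hj, (h j hj).symm]
    · rw [if_neg hj, if_neg hj]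
  have hXX : (W.drop s).take (2 * p) = (W.drop s).take p ++ (W.drop s).take p := by
    rw [two_mul, List.take_add, List.drop_drop, hdup]
  have hXlen : ((W.drop s).take p).length = p := by
    rw [List.length_take, List.length_drop]
    exact Nat.min_eq_left (by omega)
  refine hW ((W.drop s).take p) ?_ ?_
  · intro hnil
    rw [hnil] at hXlen
    simp at hXlen
    omega
  · rw [← hXX]
    exact ((List.take_prefix _ _).isInfix).trans (List.drop_suffix s W).isInfix

lemma sc_pointwise {W' : List α} {A m : ℕ}
    (heq : factor W' (A + 1) (A + 1 + (m + 2)) = factor W' (A + 1 + (m + 2)) (A + 1 + 2 * (m + 2))) :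
    ∀ j, j < m + 2 → W'[A + j]? = W'[A + (m + 2) + j]? := by
  intro j hj
  have h := congrArg (fun l => l[j]?) heq
  simp only [factor, List.getElem?_take, List.getElem?_drop] at h
  rw [if_pos (by omega : j < A + 1 + (m + 2) - (A + 1)),
    if_pos (by omega : j < A + 1 + 2 * (m + 2) - (A + 1 + (m + 2)))] at h
  rw [show A + 1 - 1 + j = A + j by omega, show A + 1 + (m + 2) - 1 + j = A + (m + 2) + j by omega]
    at h
  exact h

/-- Pointwise relations for a positive-sign square-completing quadruple. -/
lemma rels_pos {W : List α} {A m b : ℕ} {c : α} (hW : SquareFree W)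
    (h : SquareCompleting W (A + 1) (m + 2) b c) (hsgn : b + 2 ≤ (A + 1) + (m + 2)) :
    A ≤ b ∧ b ≤ A + m ∧ W[b + m + 1]? = some c ∧
      (∀ i, A ≤ i → i < b → W[i]? = W[i + (m + 1)]?) ∧
      (∀ i, b ≤ i → i ≤ A + m → W[i]? = W[i + (m + 2)]?) := by
  obtain ⟨-, -, hab, hbn, hlen, heq⟩ := h
  have pw := sc_pointwise heq
  have hAb : A ≤ b := by omega
  have hn : A + 2 * m + 3 ≤ W.length := by omega
  have RA : ∀ i, A ≤ i → i < b → W[i]? = W[i + (m + 1)]? := by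
    intro i hAi hib
    have hthis := pw (i - A) (by omega)
    rw [show A + (i - A) = i by omega,
      show A + (m + 2) + (i - A) = (i + (m + 1)) + 1 by omega] at hthis
    rw [insertIdx_getElem?_lt c hbn hib, insertIdx_getElem?_gt c (by omega) (by omega)] at hthis
    exact hthis
  have hc : W[b + m + 1]? = some c := by
    have hthis := pw (b - A) (by omega)
    rw [show A + (b - A) = b by omega,
      show A + (m + 2) + (b - A) = (b + m + 1) + 1 by omega] at hthis
    rw [insertIdx_getElem?_self c hbn, insertIdx_getElem?_gt c (by omega) (by omega)] at hthis
    exact hthis.symm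
  have RC : ∀ i, b ≤ i → i ≤ A + m → W[i]? = W[i + (m + 2)]? := by
    intro i hbi hiA
    have hthis := pw (i + 1 - A) (by omega)
    rw [show A + (i + 1 - A) = i + 1 by omega,
      show A + (m + 2) + (i + 1 - A) = (i + (m + 2)) + 1 by omega] at hthis
    rw [insertIdx_getElem?_gt c (by omega) (by omega),
      insertIdx_getElem?_gt c (by omega) (by omega)] at hthis
    exact hthis
  have hbA : b ≤ A + m := by
    by_contra hb'
    refine no_period hW A (m + 1) (by omega) (by omega) (fun j hj => ?_)
    have hthis := RA (A + j) (by omega) (by omega)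
    rw [show A + j + (m + 1) = A + (m + 1) + j by omega] at hthis
    exact hthis
  exact ⟨hAb, hbA, hc, RA, RC⟩

/-- Pointwise relations for a negative-sign square-completing quadruple. -/
lemma rels_neg {W : List α} {A m b : ℕ} {c : α} (hW : SquareFree W)
    (h : SquareCompleting W (A + 1) (m + 2) b c) (hsgn : ¬ (b + 2 ≤ (A + 1) + (m + 2))) :
    ∃ Q, b = Q + (m + 2) ∧ A + 1 ≤ Q ∧ Q ≤ A + m + 1 ∧ W[Q]? = some c ∧
      (∀ i, A ≤ i → i < Q → W[i]? = W[i + (m + 2)]?) ∧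
      (∀ i, Q < i → i ≤ A + m + 1 → W[i]? = W[i + (m + 1)]?) := by
  obtain ⟨-, -, hab, hbn, hlen, heq⟩ := h
  have pw := sc_pointwise heq
  have hbge : A + m + 2 ≤ b := by omega
  have hn : A + 2 * m + 3 ≤ W.length := by omega
  have hble : b ≤ A + 2 * m + 3 := by
    by_contra hb'
    push_neg at hb'
    refine no_period hW A (m + 2) (by omega) (by omega) (fun j hj => ?_)
    have hthis := pw j hj
    rw [insertIdx_getElem?_lt c hbn (by omega), insertIdx_getElem?_lt c hbn (by omega)] at hthis
    exact hthis
  have hbge' : A + m + 3 ≤ b := by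
    by_contra hb'
    have hb : b = A + m + 2 := by omega
    refine no_period hW (A + 1) (m + 1) (by omega) (by omega) (fun j hj => ?_)
    have hthis := pw (j + 1) (by omega)
    rw [insertIdx_getElem?_lt c hbn (by omega)] at hthis
    rw [show A + (m + 2) + (j + 1) = (A + 1 + (m + 1) + j) + 1 by omega] at hthis
    rw [insertIdx_getElem?_gt c (by omega) (by omega)] at hthis
    rw [show A + (j + 1) = A + 1 + j by omega] at hthis
    exact hthis
  obtain ⟨Q, rfl⟩ : ∃ Q, b = Q + (m + 2) := ⟨b - (m + 2), by omega⟩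
  refine ⟨Q, rfl, by omega, by omega, ?_, ?_, ?_⟩
  · have hthis := pw (Q - A) (by omega)
    rw [show A + (Q - A) = Q by omega, show A + (m + 2) + (Q - A) = Q + (m + 2) by omega] at hthis
    rw [insertIdx_getElem?_lt c hbn (by omega), insertIdx_getElem?_self c hbn] at hthis
    exact hthis
  · intro i hAi hiQ
    have hthis := pw (i - A) (by omega)
    rw [show A + (i - A) = i by omega, show A + (m + 2) + (i - A) = i + (m + 2) by omega] at hthis
    rw [insertIdx_getElem?_lt c hbn (by omega), insertIdx_getElem?_lt c hbn (by omega)] at hthis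
    exact hthis
  · intro i hQi hiA
    have hthis := pw (i - A) (by omega)
    rw [show A + (i - A) = i by omega,
      show A + (m + 2) + (i - A) = (i + (m + 1)) + 1 by omega] at hthis
    rw [insertIdx_getElem?_lt c hbn (by omega),
      insertIdx_getElem?_gt c (by omega) (by omega)] at hthis
    exact hthis

lemma adjacent_ne {W : List α} (hW : SquareFree W) {s : ℕ} (hs : s + 2 ≤ W.length)
    (h : W[s]? = W[s + 1]?) : False := by
  refine no_period hW s 1 le_rfl (by omega) (fun j hj => ?_)
  have : j = 0 := by omega
  subst this
  simpa using h

/-- The key lemma: assuming `A ≤ A'` and closeness. -/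
lemma key_lemma {W : List α} (hW : SquareFree W) {A m b A' b' : ℕ} {c c' : α}
    (h : SquareCompleting W (A + 1) (m + 2) b c) (h' : SquareCompleting W (A' + 1) (m + 2) b' c')
    (hsign : scSign (A + 1) (m + 2) b = scSign (A' + 1) (m + 2) b')
    (hle : A ≤ A') (hclose : A' ≤ A + m) :
    b = b' ∧ c = c' := by
  have hn : A + 2 * m + 3 ≤ W.length := by have := h.2.2.2.2.1; omega
  have hn' : A' + 2 * m + 3 ≤ W.length := by have := h'.2.2.2.2.1; omega
  have hbn : b ≤ W.length := h.2.2.2.1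
  have hbn' : b' ≤ W.length := h'.2.2.2.1
  by_cases hs : b + 2 ≤ (A + 1) + (m + 2)
  · have hs' : b' + 2 ≤ (A' + 1) + (m + 2) := by
      by_contra hs'
      rw [scSign, scSign, if_pos hs, if_neg hs'] at hsign
      norm_num at hsign
    obtain ⟨hAb, hbA, hc, RA, RC⟩ := rels_pos hW h hs
    obtain ⟨hAb', hbA', hc', RA', RC'⟩ := rels_pos hW h' hs'
    have hbb : b = b' := by
      rcases lt_trichotomy b b' with hlt | he | hgt
      · exfalso
        by_cases hb'A : b' = A'
        · subst hb'A
        -- combined period m+2 starting at b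
          refine no_period hW b (m + 2) (by omega) (by omega) (fun j hj => ?_)
          by_cases hcase : b + j ≤ A + m
          · have hthis := RC (b + j) (by omega) hcase
            rw [show b + j + (m + 2) = b + (m + 2) + j by omega] at hthis
            exact hthis
          · have hthis := RC' (b + j) (by omega) (by omega)
            rw [show b + j + (m + 2) = b + (m + 2) + j by omega] at hthis
            exact hthis
        · set i0 := max b A' with hi0
          have hmax1 : b ≤ i0 := le_max_left _ _
          have hmax2 : A' ≤ i0 := le_max_right _ _
          have hmax3 : i0 ≤ A + m := max_le hbA (by omega)
          have hmax4 : i0 < b' := max_lt hlt (by omega)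
          have h1 := RC i0 hmax1 hmax3
          have h2 := RA' i0 hmax2 hmax4
          refine adjacent_ne hW (s := i0 + (m + 1)) (by omega) ?_
          rw [show i0 + (m + 1) + 1 = i0 + (m + 2) by omega]
          exact h2.symm.trans h1
      · exact he
      · exfalso
        have h1 := RA b' (by omega) hgt
        have h2 := RC' b' le_rfl hbA'
        refine adjacent_ne hW (s := b' + (m + 1)) (by omega) ?_
        rw [show b' + (m + 1) + 1 = b' + (m + 2) by omega]
        exact h1.symm.trans h2
    subst hbb
    refine ⟨rfl, ?_⟩
    have := hc.symm.trans hc'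
    simpa using this
  · have hs' : ¬ (b' + 2 ≤ (A' + 1) + (m + 2)) := by
      intro hs'
      rw [scSign, scSign, if_neg hs, if_pos hs'] at hsign
      norm_num at hsign
    obtain ⟨Q, rfl, hQ1, hQ2, hc, RA, RC⟩ := rels_neg hW h hs
    obtain ⟨Q', rfl, hQ1', hQ2', hc', RA', RC'⟩ := rels_neg hW h' hs'
    have hQQ : Q = Q' := by
      rcases lt_trichotomy Q Q' with hlt | he | hgt
      · exfalso
        by_cases hQtop : Q = A + m + 1
        · -- combined period m+2 starting at A
          have hA'1 : A + 1 ≤ A' := by omega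
          refine no_period hW A (m + 2) (by omega) (by omega) (fun j hj => ?_)
          rw [show A + (m + 2) + j = A + j + (m + 2) by omega]
          by_cases hcase : j ≤ m
          · exact RA (A + j) (by omega) (by omega)
          · exact RA' (A + j) (by omega) (by omega)
        · by_cases hQQ' : Q' = Q + 1
          · have h1 := RA' Q (by omega) (by omega)
            have h2 := RC (Q + 1) (by omega) (by omega)
            refine adjacent_ne hW (s := Q) (by omega) ?_
            rw [show Q + 1 + (m + 1) = Q + (m + 2) by omega] at h2
            exact h1.trans h2.symm
          · set i0 := max (Q + 1) A' with hi0
            have hmax1 : Q + 1 ≤ i0 := le_max_left _ _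
            have hmax2 : A' ≤ i0 := le_max_right _ _
            have hmax3 : i0 ≤ A + m + 1 := max_le (by omega) (by omega)
            have hmax4 : i0 < Q' := max_lt (by omega) (by omega)
            have h1 := RC i0 (by omega) hmax3
            have h2 := RA' i0 hmax2 hmax4
            refine adjacent_ne hW (s := i0 + (m + 1)) (by omega) ?_
            rw [show i0 + (m + 1) + 1 = i0 + (m + 2) by omega]
            exact h1.symm.trans h2
      · exact he
      · exfalso
        have hQ'le : Q' ≤ A' + m := by omega
        by_cases hQQ' : Q = Q' + 1
        · have h1 := RA Q' (by omega) (by omega)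
          have h2 := RC' (Q' + 1) (by omega) (by omega)
          refine adjacent_ne hW (s := Q') (by omega) ?_
          rw [show Q' + 1 + (m + 1) = Q' + (m + 2) by omega] at h2
          exact h1.trans h2.symm
        · have h1 := RC' (Q' + 1) (by omega) (by omega)
          have h2 := RA (Q' + 1) (by omega) (by omega)
          refine adjacent_ne hW (s := Q' + 1 + (m + 1)) (by omega) ?_
          rw [show Q' + 1 + (m + 1) + 1 = Q' + 1 + (m + 2) by omega]
          exact h1.symm.trans h2
    subst hQQ
    refine ⟨rfl, ?_⟩
    have := hc.symm.trans hc'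
    simpa using this

end Aux

/-- Key proposition, second part: two square-completing quadruples in a square-free word with
the same sign and the same length parameter `ℓ` either have `|a - a'| ≥ ℓ - 1`, or they
share the same gap and inserted letter. -/
theorem square_completing_same_length_far_or_same {α : Type*} (W : List α) (hW : SquareFree W)
    (a ℓ b : ℕ) (c : α) (a' b' : ℕ) (c' : α)
    (h : SquareCompleting W a ℓ b c) (h' : SquareCompleting W a' ℓ b' c')
    (hsign : scSign a ℓ b = scSign a' ℓ b') :
    ((ℓ : ℤ) - 1 ≤ |(a : ℤ) - (a' : ℤ)|) ∨ (b = b' ∧ c = c') := by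
  by_cases hfar : (ℓ : ℤ) - 1 ≤ |(a : ℤ) - (a' : ℤ)|
  · exact Or.inl hfar
  · right
    have hlt : |(a : ℤ) - (a' : ℤ)| < (ℓ : ℤ) - 1 := not_le.mp hfar
    rw [abs_lt] at hlt
    obtain ⟨hlt1, hlt2⟩ := hlt
    have hℓ1 : 1 ≤ ℓ := h.2.1
    have hℓ2 : 2 ≤ ℓ := by
      rcases Nat.lt_or_ge ℓ 2 with hcase | hcase
      · exfalso
        have : ℓ = 1 := by omega
        subst this
        simp at hlt1 hlt2
        omega
      · exact hcase
    have ha1 : 1 ≤ a := h.1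
    have ha1' : 1 ≤ a' := h'.1
    obtain ⟨m, rfl⟩ : ∃ m, ℓ = m + 2 := ⟨ℓ - 2, by omega⟩
    obtain ⟨A, rfl⟩ : ∃ A, a = A + 1 := ⟨a - 1, by omega⟩
    obtain ⟨A', rfl⟩ : ∃ A', a' = A' + 1 := ⟨a' - 1, by omega⟩
    rcases le_total A A' with hle | hle
    · exact key_lemma hW h h' hsign hle (by omega)
    · obtain ⟨hb, hcc⟩ := key_lemma hW h' h hsign.symm hle (by omega)
      exact ⟨hb.symm, hcc.symm⟩
end

section
/- Let W be a square-free word. If (a, ℓ, b, c) is a square-completing quadruple in W with sign 1 (i.e., b ≤ a + ℓ − 2), then the letter of W at position b + ℓ equals c. If (a, ℓ, b, c) is a square-completing quadruple in W with sign −1 (i.e., b ≥ a + ℓ − 1), then b ≤ a + 2ℓ − 2 and the letter of W at position b + 1 − ℓ equals c. -/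
/-- If `(a, ℓ, b, c)` is square-completing in the square-free word `W` with sign `1`
(i.e. `b ≤ a + ℓ - 2`), then the letter of `W` at position `b + ℓ` equals `c`; if it has
sign `-1` (i.e. `b ≥ a + ℓ - 1`), then `b ≤ a + 2ℓ - 2` and the letter of `W` at position
`b + 1 - ℓ` equals `c`.  (Letters are numbered from 1, so position `p` is index `p - 1`.) -/
theorem square_completing_forced_letter {α : Type*} (W : List α) (hW : SquareFree W)
    (a ℓ b : ℕ) (c : α) (h : SquareCompleting W a ℓ b c) :
    (b + 2 ≤ a + ℓ → W[b + ℓ - 1]? = some c) ∧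
    (a + ℓ ≤ b + 1 → b + 2 ≤ a + 2 * ℓ ∧ W[b + 1 - ℓ - 1]? = some c) := by
  obtain ⟨ha, hl, hab, hbW, hlen, heq⟩ := h
  set W' := W.insertIdx b c with hW'
  have hW'len : W'.length = W.length + 1 := List.length_insertIdx_of_le_length hbW c
  -- key pointwise equality
  have key : ∀ i, i < ℓ → W'[a - 1 + i]? = W'[a + ℓ - 1 + i]? := by
    intro i hi
    have := congrArg (fun L => L[i]?) heq
    simp only [factor] at this
    have e1 : a + ℓ - a = ℓ := by omega
    have e2 : a + 2 * ℓ - (a + ℓ) = ℓ := by omega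
    rw [e1, e2, List.getElem?_take_of_lt hi, List.getElem?_take_of_lt hi,
      List.getElem?_drop, List.getElem?_drop] at this
    exact this
  -- inserted letter
  have hself : W'[b]? = some c := by
    rw [List.getElem?_eq_getElem (by omega)]
    exact congrArg some (List.getElem_insertIdx_self _)
  -- values of W' below the insertion point agree with W
  have hlt : ∀ j, j < b → W'[j]? = W[j]? := by
    intro j hj
    rw [List.getElem?_eq_getElem (by omega), List.getElem?_eq_getElem (by omega)]
    exact congrArg some (List.getElem_insertIdx_of_lt hj _)
  -- values of W' above the insertion point are shifted
  have hgt : ∀ j, b < j → j < W.length + 1 → W'[j]? = W[j - 1]? := by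
    intro j hj hj2
    rw [List.getElem?_eq_getElem (by omega), List.getElem?_eq_getElem (by omega)]
    have hj' : j = b + (j - b - 1) + 1 := by omega
    have := List.getElem_insertIdx_add_succ W c b (j - b - 1) (by omega)
      (by rw [hW'len]; omega)
    refine congrArg some ?_
    convert this using 2
    all_goals omega
  constructor
  · -- sign 1
    intro hb2
    have hi : b - (a - 1) < ℓ := by omega
    have k := key (b - (a - 1)) hi
    have e1 : a - 1 + (b - (a - 1)) = b := by omega
    have e2 : a + ℓ - 1 + (b - (a - 1)) = b + ℓ := by omega
    rw [e1, e2, hself] at k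
    have hrange : b + ℓ ≤ W.length := by omega
    rw [hgt (b + ℓ) (by omega) (by omega)] at k
    have e3 : b + ℓ - 1 = b + ℓ - 1 := rfl
    exact k.symm
  · -- sign -1
    intro hab2
    have hb2 : b + 2 ≤ a + 2 * ℓ := by
      by_contra hcon
      push_neg at hcon
      -- then b ≥ a + 2ℓ - 1, so the square lies entirely in W
      have hbig : a + 2 * ℓ - 1 ≤ b := by omega
      have heqW : (W.drop (a - 1)).take ℓ = (W.drop (a + ℓ - 1)).take ℓ := by
        apply List.ext_getElem?
        intro j
        by_cases hj : j < ℓ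
        · rw [List.getElem?_take_of_lt hj, List.getElem?_take_of_lt hj,
            List.getElem?_drop, List.getElem?_drop,
            ← hlt (a - 1 + j) (by omega), ← hlt (a + ℓ - 1 + j) (by omega)]
          exact key j hj
        · rw [List.getElem?_eq_none, List.getElem?_eq_none] <;>
            · simp only [List.length_take]
              omega
      have hXne : (W.drop (a - 1)).take ℓ ≠ [] := by
        have : ((W.drop (a - 1)).take ℓ).length = ℓ := by
          simp only [List.length_take, List.length_drop]
          omega
        intro hE
        rw [hE] at this
        simp at this
        omega
      apply hW _ hXne
      have hsq : (W.drop (a - 1)).take ℓ ++ (W.drop (a - 1)).take ℓ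
          = (W.drop (a - 1)).take (2 * ℓ) := by
        rw [two_mul, List.take_add, List.drop_drop]
        congr 1
        rw [heqW]
        congr 2
        omega
      rw [hsq]
      exact ((W.drop (a - 1)).take_prefix (2 * ℓ)).isInfix.trans
        (W.drop_suffix (a - 1)).isInfix
    refine ⟨hb2, ?_⟩
    have hi : b - (a + ℓ - 1) < ℓ := by omega
    have k := key (b - (a + ℓ - 1)) hi
    have e1 : a + ℓ - 1 + (b - (a + ℓ - 1)) = b := by omega
    have e2 : a - 1 + (b - (a + ℓ - 1)) = b - ℓ := by omega
    rw [e1, e2, hself] at k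
    rw [hlt (b - ℓ) (by omega)] at k
    have e3 : b + 1 - ℓ - 1 = b - ℓ := by omega
    rw [e3]
    exact k
end

section
/- Let W be an n-letter square-free word and let 𝒜 be a set of square-completing quadruples (a, ℓ, b, c) in W such that no two elements of 𝒜 share the same pair (b, c). For an integer L ≥ 2, let 𝒜_L denote the set of quadruples in 𝒜 whose length parameter equals L. Then |𝒜_L| ≤ 2n / (L − 1). -/
namespace SC

def NoSq {β : Type*} (n : ℕ) (w : ℕ → β) : Prop :=
  ∀ s r : ℕ, 1 ≤ s → 1 ≤ r → s + 2*r ≤ n + 1 →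
    (∀ i, i < r → w (s+i) = w (s+r+i)) → False

theorem nosq_of_squareFree {α : Type*} {W : List α} (hW : SquareFree W) :
    NoSq W.length (fun k => W[k-1]?) := by
  intro s r hs hr hlen heq
  set X : List α := (W.drop (s-1)).take r with hX
  have hXlen : X.length = r := by
    simp only [hX, List.length_take, List.length_drop]
    omega
  have hX2 : X = (W.drop (s-1+r)).take r := by
    apply List.ext_getElem?
    intro i
    by_cases hi : i < r
    · rw [hX, List.getElem?_take, List.getElem?_take, if_pos hi, if_pos hi,
        List.getElem?_drop, List.getElem?_drop]
      have h := heq i hi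
      simp only at h
      rw [show s + i - 1 = s-1+i by omega, show s + r + i - 1 = s-1+r+i by omega] at h
      exact h
    · rw [hX, List.getElem?_take, List.getElem?_take, if_neg hi, if_neg hi]
  apply hW X (by intro h; rw [h] at hXlen; simp at hXlen; omega)
  have hXX : X ++ X = (W.drop (s-1)).take (2*r) := by
    rw [two_mul, List.take_add]
    congr 1
    rw [hX2, List.drop_drop]
  refine ⟨W.take (s-1), W.drop (s-1+2*r), ?_⟩
  rw [hXX, show W.drop (s-1+2*r) = (W.drop (s-1)).drop (2*r) by rw [List.drop_drop]]
  rw [List.append_assoc, List.take_append_drop, List.take_append_drop]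
variable {β : Type*} {n m : ℕ} {w : ℕ → β}

theorem wc (w : ℕ → β) {i j : ℕ} (h : i = j) : w i = w j := by rw [h]

theorem sq1 (hns : NoSq n w) {k : ℕ} (h1 : 1 ≤ k) (h2 : k + 1 ≤ n) (he : w k = w (k+1)) :
    False :=
  hns k 1 h1 le_rfl (by omega) (fun i hi => by interval_cases i; simpa using he)

theorem sqrun (hns : NoSq n w) {s r : ℕ} (h1 : 1 ≤ s) (h2 : 1 ≤ r) (h3 : s+2*r ≤ n+1)
    (he : ∀ k, s ≤ k → k < s + r → w k = w (k+r)) : False :=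
  hns s r h1 h2 h3 (fun i hi => (he (s+i) (by omega) (by omega)).trans (wc w (by omega)))

/-- A "minus defect": deleting the letter at position `p` of the window `[a, a+2m]`
creates a square of half-length `m`; the deleted letter is in the first half. -/
structure MinusD (n m : ℕ) (w : ℕ → β) (a p : ℕ) : Prop where
  ha : 1 ≤ a
  hn2 : a + 2*m ≤ n
  hap : a + 1 ≤ p
  hpm : p ≤ a + m
  hY : ∀ k, a ≤ k → k + 1 ≤ p → w k = w (k+m+1)
  hX : ∀ k, p + 1 ≤ k → k ≤ a + m → w k = w (k+m)

/-- A "plus defect": deleting the letter at position `p` of the window `[A, A+2m]`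
creates a square of half-length `m`; the deleted letter is in the second half. -/
structure PlusD (n m : ℕ) (w : ℕ → β) (A p : ℕ) : Prop where
  ha : 1 ≤ A
  hn2 : A + 2*m ≤ n
  hq1 : A + m ≤ p
  hq2 : p + 1 ≤ A + 2*m
  hX : ∀ k, A ≤ k → k + m + 1 ≤ p → w k = w (k+m)
  hY : ∀ k, p ≤ k + m → k + 1 ≤ A + m → w k = w (k+m+1)

theorem pairMM (hns : NoSq n w) (hm : 1 ≤ m) {a1 p1 a2 p2 : ℕ}
    (D1 : MinusD n m w a1 p1) (D2 : MinusD n m w a2 p2)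
    (h12 : p1 < p2) (hwin : p2 + 1 ≤ p1 + m) (hcl : a2 ≤ a1 + m) : False := by
  obtain ⟨ha1, hn1, hap1, hpm1, hY1, hX1⟩ := D1
  obtain ⟨ha2, hn2, hap2, hpm2, hY2, hX2⟩ := D2
  by_cases hp : p1 = a1 + m
  · refine sqrun hns (s := p2 - (m+1)) (r := m+1) (by omega) (by omega) (by omega) ?_
    intro k hk1 hk2
    by_cases hkp : k + 1 ≤ p1
    · exact (hY1 k (by omega) hkp).trans (wc w (by omega))
    · exact (hY2 k (by omega) (by omega)).trans (wc w (by omega))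
  · by_cases ha : p1 + 1 ≤ a2
    · exact sq1 hns (k := a2+m) (by omega) (by omega)
        ((hX1 a2 ha (by omega)).symm.trans (hY2 a2 le_rfl (by omega)))
    · exact sq1 hns (k := p1) (by omega) (by omega)
        ((hY2 p1 (by omega) (by omega)).trans
          ((wc w (by omega)).trans (hX1 (p1+1) le_rfl (by omega)).symm))

theorem pairPP (hns : NoSq n w) (hm : 1 ≤ m) {A1 q1 A2 q2 : ℕ}
    (P1 : PlusD n m w A1 q1) (P2 : PlusD n m w A2 q2)
    (h12 : q1 < q2) (hwin : q2 + 1 ≤ q1 + m) (hcl : A2 ≤ A1 + m) : False := by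
  obtain ⟨hA1, hn1, hq11, hq12, hX1, hY1⟩ := P1
  obtain ⟨hA2, hn2, hq21, hq22, hX2, hY2⟩ := P2
  by_cases hp : q2 = A2 + m
  · -- pure second plus: Y-run [q1-m, q1]
    refine sqrun hns (s := q1 - m) (r := m+1) (by omega) (by omega) (by omega) ?_
    intro k hk1 hk2
    by_cases hkp : k + 1 ≤ A1 + m
    · exact (hY1 k (by omega) hkp).trans (wc w (by omega))
    · exact (hY2 k (by omega) (by omega)).trans (wc w (by omega))
  · by_cases ha : A2 + 1 ≤ A1 + m
    · -- F1 at k = max A2 (q1-m)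
      refine sq1 hns (k := max A2 (q1-m) + m) (by omega) ?_ ?_
      · have := le_max_left A2 (q1-m); omega
      · have h1 := le_max_left A2 (q1-m)
        have h2 := le_max_right A2 (q1-m)
        rcases max_choice A2 (q1-m) with h | h <;> rw [h]
        · exact (hX2 A2 le_rfl (by omega)).symm.trans (hY1 A2 (by omega) (by omega))
        · exact (hX2 (q1-m) (by omega) (by omega)).symm.trans
            (hY1 (q1-m) (by omega) (by omega))
    · -- A2 = A1 + m : F2 at k = A1+m-1
      refine sq1 hns (k := A1+m-1) (by omega) (by omega) ?_
      refine (hY1 (A1+m-1) (by omega) (by omega)).trans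
        ((wc w (by omega)).trans ((hX2 (A1+m) (by omega) (by omega)).symm.trans (wc w (by omega))))

theorem pairMP (hns : NoSq n w) (hm : 1 ≤ m) {a p A q : ℕ}
    (D : MinusD n m w a p) (P : PlusD n m w A q)
    (h1 : p + 2 ≤ q) (h2 : q ≤ p + 2*m) :
    (A + m ≤ p ∧ q ≤ a + m) ∨ (p + 1 ≤ A ∧ a + 2*m + 1 ≤ q) := by
  obtain ⟨ha, hn1, hap, hpm, hY1, hX1⟩ := D
  obtain ⟨hA, hn2, hq1, hq2, hX2, hY2⟩ := P
  by_cases hPA : p + 1 ≤ A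
  · refine Or.inr ⟨hPA, ?_⟩
    by_cases hq : a + 2*m + 1 ≤ q
    · exact hq
    · exfalso
      by_cases hp : p = a + m
      · omega
      · -- F1 at k = max (p+1) (q-m)
        refine sq1 hns (k := max (p+1) (q-m) + m) (by omega) ?_ ?_
        · have := le_max_right (p+1) (q-m); omega
        · rcases max_choice (p+1) (q-m) with h | h <;> rw [h]
          · exact (hX1 (p+1) le_rfl (by omega)).symm.trans
              (hY2 (p+1) (by omega) (by omega))
          · have := le_max_left (p+1) (q-m)
            exact (hX1 (q-m) (by omega) (by omega)).symm.trans
              (hY2 (q-m) (by omega) (by omega))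
  · left
    have hAp : A + m ≤ p := by
      by_contra hc
      by_cases hp2 : q = A + m
      · by_cases hAa : a + 1 ≤ A
        · -- Y-run of length m+1 starting at A-1
          refine sqrun hns (s := A - 1) (r := m+1) (by omega) (by omega) (by omega) ?_
          intro k hk1 hk2
          by_cases hkp : k + 1 ≤ p
          · exact (hY1 k (by omega) hkp).trans (wc w (by omega))
          · exact (hY2 k (by omega) (by omega)).trans (wc w (by omega))
        · -- F1 at k = max (p+1) A
          refine sq1 hns (k := max (p+1) A + m) (by omega) ?_ ?_
          · have := le_max_right (p+1) A; omega
          · rcases max_choice (p+1) A with h | h <;> rw [h]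
            · exact (hX1 (p+1) le_rfl (by omega)).symm.trans
                (hY2 (p+1) (by omega) (by omega))
            · have := le_max_left (p+1) A
              exact (hX1 A (by omega) (by omega)).symm.trans
                (hY2 A (by omega) (by omega))
      · by_cases hAa : a + 1 ≤ A
        · by_cases hApp : A + 1 ≤ p
          · exact sq1 hns (k := A+m) (by omega) (by omega)
              ((hX2 A le_rfl (by omega)).symm.trans (hY1 A (by omega) hApp))
          · -- A = p : F2 at p-1
            refine sq1 hns (k := p-1) (by omega) (by omega) ?_
            refine (hY1 (p-1) (by omega) (by omega)).trans
              ((wc w (by omega)).trans ((hX2 p (by omega) (by omega)).symm.trans (wc w (by omega))))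
        · by_cases hq : a + m + 1 ≤ q
          · exact sq1 hns (k := a+m) (by omega) (by omega)
              ((hX2 a (by omega) hq).symm.trans (hY1 a le_rfl hap))
          · by_cases hApp : p + 2 ≤ A + m
            · refine sq1 hns (k := max (p+1) (q-m) + m) (by omega) ?_ ?_
              · have := le_max_right (p+1) (q-m); omega
              · rcases max_choice (p+1) (q-m) with h | h <;> rw [h]
                · exact (hX1 (p+1) le_rfl (by omega)).symm.trans
                    (hY2 (p+1) (by omega) (by omega))
                · have := le_max_left (p+1) (q-m)
                  exact (hX1 (q-m) (by omega) (by omega)).symm.trans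
                    (hY2 (q-m) (by omega) (by omega))
            · -- A+m = p+1 : F2 at p
              refine sq1 hns (k := p) (by omega) (by omega) ?_
              refine (hY2 p (by omega) (by omega)).trans
                ((wc w (by omega)).trans (hX1 (p+1) le_rfl (by omega)).symm)
    refine ⟨hAp, ?_⟩
    by_contra hc
    exact sq1 hns (k := max A a + m) (by omega)
      (by have := le_max_right A a; omega)
      (by rcases max_choice A a with h | h <;> rw [h]
          · exact (hX2 A le_rfl (by omega)).symm.trans (hY1 A (by omega) (by omega))
          · exact (hX2 a (by omega) (by omega)).symm.trans (hY1 a le_rfl (by omega)))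

namespace T
variable {β : Type*} {n m : ℕ} {w : ℕ → β}

theorem tripleMMM (hns : NoSq n w) (hm : 1 ≤ m) {t a1 p1 a2 p2 a3 p3 : ℕ}
    (D1 : MinusD n m w a1 p1) (D2 : MinusD n m w a2 p2) (D3 : MinusD n m w a3 p3)
    (hc1 : p1 + 1 ≤ t ∧ t ≤ p1 + m) (hc2 : p2 + 1 ≤ t ∧ t ≤ p2 + m)
    (hc3 : p3 + 1 ≤ t ∧ t ≤ p3 + m) (h12 : p1 < p2) (h23 : p2 < p3) : False := by
  by_cases c12 : a2 ≤ a1 + m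
  · exact pairMM hns hm D1 D2 h12 (by omega) c12
  by_cases c23 : a3 ≤ a2 + m
  · exact pairMM hns hm D2 D3 h23 (by omega) c23
  have h3 := D3.hap; have h1 := D1.hpm; omega

theorem tripleMMP (hns : NoSq n w) (hm : 1 ≤ m) {t a1 p1 a2 p2 A q : ℕ}
    (D1 : MinusD n m w a1 p1) (D2 : MinusD n m w a2 p2) (P : PlusD n m w A q)
    (hc1 : p1 + 1 ≤ t ∧ t ≤ p1 + m) (hc2 : p2 + 1 ≤ t ∧ t ≤ p2 + m)
    (hcP : q ≤ t + m ∧ t + 1 ≤ q) (h12 : p1 < p2) : False := by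
  by_cases c12 : a2 ≤ a1 + m
  · exact pairMM hns hm D1 D2 h12 (by omega) c12
  rcases pairMP hns hm D2 P (by omega) (by omega) with ⟨hL1, hL2⟩ | ⟨hR1, hR2⟩
  · rcases pairMP hns hm D1 P (by omega) (by omega) with ⟨hL1', hL2'⟩ | ⟨hR1', hR2'⟩
    · have := D2.hap; omega
    · omega
  · have := D1.hpm; omega

theorem tripleMPP (hns : NoSq n w) (hm : 1 ≤ m) {t a p A1 q1 A2 q2 : ℕ}
    (D : MinusD n m w a p) (P1 : PlusD n m w A1 q1) (P2 : PlusD n m w A2 q2)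
    (hcD : p + 1 ≤ t ∧ t ≤ p + m) (hc1 : q1 ≤ t + m ∧ t + 1 ≤ q1)
    (hc2 : q2 ≤ t + m ∧ t + 1 ≤ q2) (h12 : q1 < q2) : False := by
  by_cases c12 : A2 ≤ A1 + m
  · exact pairPP hns hm P1 P2 h12 (by omega) c12
  rcases pairMP hns hm D P1 (by omega) (by omega) with ⟨hL1, hL2⟩ | ⟨hR1, hR2⟩
  · rcases pairMP hns hm D P2 (by omega) (by omega) with ⟨hL1', hL2'⟩ | ⟨hR1', hR2'⟩
    · have := P1.hq2; omega
    · omega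
  · have := P2.hq1; omega

theorem triplePPP (hns : NoSq n w) (hm : 1 ≤ m) {t A1 q1 A2 q2 A3 q3 : ℕ}
    (P1 : PlusD n m w A1 q1) (P2 : PlusD n m w A2 q2) (P3 : PlusD n m w A3 q3)
    (hc1 : q1 ≤ t + m ∧ t + 1 ≤ q1) (hc2 : q2 ≤ t + m ∧ t + 1 ≤ q2)
    (hc3 : q3 ≤ t + m ∧ t + 1 ≤ q3) (h12 : q1 < q2) (h23 : q2 < q3) : False := by
  by_cases c12 : A2 ≤ A1 + m
  · exact pairPP hns hm P1 P2 h12 (by omega) c12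
  by_cases c23 : A3 ≤ A2 + m
  · exact pairPP hns hm P2 P3 h23 (by omega) c23
  have h1 := P1.hq2; have h3 := P3.hq1; omega

theorem tripleMMM' (hns : NoSq n w) (hm : 1 ≤ m) {t a1 p1 a2 p2 a3 p3 : ℕ}
    (D1 : MinusD n m w a1 p1) (D2 : MinusD n m w a2 p2) (D3 : MinusD n m w a3 p3)
    (hc1 : p1 + 1 ≤ t ∧ t ≤ p1 + m) (hc2 : p2 + 1 ≤ t ∧ t ≤ p2 + m)
    (hc3 : p3 + 1 ≤ t ∧ t ≤ p3 + m)
    (ne12 : p1 ≠ p2) (ne13 : p1 ≠ p3) (ne23 : p2 ≠ p3) : False := by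
  rcases lt_trichotomy p1 p2 with h | h | h
  · rcases lt_trichotomy p2 p3 with g | g | g
    · exact tripleMMM hns hm D1 D2 D3 hc1 hc2 hc3 h g
    · exact ne23 g
    · rcases lt_trichotomy p1 p3 with f | f | f
      · exact tripleMMM hns hm D1 D3 D2 hc1 hc3 hc2 f g
      · exact ne13 f
      · exact tripleMMM hns hm D3 D1 D2 hc3 hc1 hc2 f h
  · exact ne12 h
  · rcases lt_trichotomy p1 p3 with g | g | g
    · exact tripleMMM hns hm D2 D1 D3 hc2 hc1 hc3 h g
    · exact ne13 g
    · rcases lt_trichotomy p2 p3 with f | f | f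
      · exact tripleMMM hns hm D2 D3 D1 hc2 hc3 hc1 f g
      · exact ne23 f
      · exact tripleMMM hns hm D3 D2 D1 hc3 hc2 hc1 f h

theorem triplePPP' (hns : NoSq n w) (hm : 1 ≤ m) {t A1 q1 A2 q2 A3 q3 : ℕ}
    (P1 : PlusD n m w A1 q1) (P2 : PlusD n m w A2 q2) (P3 : PlusD n m w A3 q3)
    (hc1 : q1 ≤ t + m ∧ t + 1 ≤ q1) (hc2 : q2 ≤ t + m ∧ t + 1 ≤ q2)
    (hc3 : q3 ≤ t + m ∧ t + 1 ≤ q3)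
    (ne12 : q1 ≠ q2) (ne13 : q1 ≠ q3) (ne23 : q2 ≠ q3) : False := by
  rcases lt_trichotomy q1 q2 with h | h | h
  · rcases lt_trichotomy q2 q3 with g | g | g
    · exact triplePPP hns hm P1 P2 P3 hc1 hc2 hc3 h g
    · exact ne23 g
    · rcases lt_trichotomy q1 q3 with f | f | f
      · exact triplePPP hns hm P1 P3 P2 hc1 hc3 hc2 f g
      · exact ne13 f
      · exact triplePPP hns hm P3 P1 P2 hc3 hc1 hc2 f h
  · exact ne12 h
  · rcases lt_trichotomy q1 q3 with g | g | g
    · exact triplePPP hns hm P2 P1 P3 hc2 hc1 hc3 h g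
    · exact ne13 g
    · rcases lt_trichotomy q2 q3 with f | f | f
      · exact triplePPP hns hm P2 P3 P1 hc2 hc3 hc1 f g
      · exact ne23 f
      · exact triplePPP hns hm P3 P2 P1 hc3 hc2 hc1 f h

theorem tripleMMP' (hns : NoSq n w) (hm : 1 ≤ m) {t a1 p1 a2 p2 A q : ℕ}
    (D1 : MinusD n m w a1 p1) (D2 : MinusD n m w a2 p2) (P : PlusD n m w A q)
    (hc1 : p1 + 1 ≤ t ∧ t ≤ p1 + m) (hc2 : p2 + 1 ≤ t ∧ t ≤ p2 + m)
    (hcP : q ≤ t + m ∧ t + 1 ≤ q) (ne12 : p1 ≠ p2) : False := by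
  rcases lt_trichotomy p1 p2 with h | h | h
  · exact tripleMMP hns hm D1 D2 P hc1 hc2 hcP h
  · exact ne12 h
  · exact tripleMMP hns hm D2 D1 P hc2 hc1 hcP h

theorem tripleMPP' (hns : NoSq n w) (hm : 1 ≤ m) {t a p A1 q1 A2 q2 : ℕ}
    (D : MinusD n m w a p) (P1 : PlusD n m w A1 q1) (P2 : PlusD n m w A2 q2)
    (hcD : p + 1 ≤ t ∧ t ≤ p + m) (hc1 : q1 ≤ t + m ∧ t + 1 ≤ q1)
    (hc2 : q2 ≤ t + m ∧ t + 1 ≤ q2) (ne12 : q1 ≠ q2) : False := by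
  rcases lt_trichotomy q1 q2 with h | h | h
  · exact tripleMPP hns hm D P1 P2 hcD hc1 hc2 h
  · exact ne12 h
  · exact tripleMPP hns hm D P2 P1 hcD hc2 hc1 h

end T

open T in
theorem noThree {β : Type*} {n m : ℕ} {w : ℕ → β} (hns : NoSq n w) (hm : 1 ≤ m) (t : ℕ)
    (s1 s2 s3 : Bool) (a1 p1 a2 p2 a3 p3 : ℕ)
    (h1 : if s1 then PlusD n m w a1 p1 else MinusD n m w a1 p1)
    (h2 : if s2 then PlusD n m w a2 p2 else MinusD n m w a2 p2)
    (h3 : if s3 then PlusD n m w a3 p3 else MinusD n m w a3 p3)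
    (hc1 : if s1 then (p1 ≤ t + m ∧ t + 1 ≤ p1) else (p1 + 1 ≤ t ∧ t ≤ p1 + m))
    (hc2 : if s2 then (p2 ≤ t + m ∧ t + 1 ≤ p2) else (p2 + 1 ≤ t ∧ t ≤ p2 + m))
    (hc3 : if s3 then (p3 ≤ t + m ∧ t + 1 ≤ p3) else (p3 + 1 ≤ t ∧ t ≤ p3 + m))
    (ne12 : s1 = s2 → p1 ≠ p2) (ne13 : s1 = s3 → p1 ≠ p3) (ne23 : s2 = s3 → p2 ≠ p3) :
    False := by
  cases s1 <;> cases s2 <;> cases s3 <;> simp only [if_true, if_false, Bool.false_eq_true, true_implies, false_implies] at *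
  · exact tripleMMM' hns hm h1 h2 h3 hc1 hc2 hc3 ne12 ne13 ne23
  · exact tripleMMP' hns hm h1 h2 h3 hc1 hc2 hc3 ne12
  · exact tripleMMP' hns hm h1 h3 h2 hc1 hc3 hc2 ne13
  · exact tripleMPP' hns hm h1 h2 h3 hc1 hc2 hc3 ne23
  · exact tripleMMP' hns hm h2 h3 h1 hc2 hc3 hc1 ne23
  · exact tripleMPP' hns hm h2 h1 h3 hc2 hc1 hc3 ne13
  · exact tripleMPP' hns hm h3 h1 h2 hc3 hc1 hc2 ne12
  · exact triplePPP' hns hm h1 h2 h3 hc1 hc2 hc3 ne12 ne13 ne23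

theorem sqrun' {α : Type*} {W : List α} (hns : NoSq W.length (fun k => W[k-1]?))
    {s r : ℕ} (h1 : 1 ≤ s) (h2 : 1 ≤ r) (h3 : s+2*r ≤ W.length+1)
    (he : ∀ k, s ≤ k → k < s + r → W[k-1]? = W[k+r-1]?) : False :=
  hns s r h1 h2 h3 (fun i hi => by
    have h := he (s+i) (by omega) (by omega)
    simp only at h ⊢
    rw [show s + i + r - 1 = s + r + i - 1 by omega] at h
    exact h)

theorem extract {α : Type*} {W : List α} {a b m : ℕ} {c : α}
    (hns : NoSq W.length (fun k => W[k-1]?))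
    (hm : 1 ≤ m)
    (hsc : SquareCompleting W a (m+1) b c) :
    (b + 2 ≤ a + (m+1) ∧ PlusD W.length m (fun k => W[k-1]?) a (b+m+1) ∧ W[b+m]? = some c)
    ∨ (∃ p, p + m = b ∧ MinusD W.length m (fun k => W[k-1]?) a p ∧ W[p-1]? = some c
        ∧ ¬(b + 2 ≤ a + (m+1))) := by
  obtain ⟨ha, hl, hab, hbW, hlen, heq⟩ := hsc
  set W' := W.insertIdx b c with hW'
  rw [show factor W' a (a+(m+1)) = (W'.drop (a-1)).take (m+1) by
        unfold factor; rw [show a+(m+1)-a = m+1 by omega],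
      show factor W' (a+(m+1)) (a+2*(m+1)) = (W'.drop (a+m)).take (m+1) by
        unfold factor; rw [show a+2*(m+1)-(a+(m+1)) = m+1 by omega,
          show a+(m+1)-1 = a+m by omega]] at heq
  have E1 : ∀ j, a ≤ j → j ≤ a + m → W'[j-1]? = W'[j+m]? := by
    intro j hj1 hj2
    have h := congrArg (fun l => l[j-a]?) heq
    simp only [List.getElem?_take, List.getElem?_drop] at h
    rw [if_pos (show j-a < m+1 by omega), if_pos (show j-a < m+1 by omega)] at h
    rw [show a-1+(j-a) = j-1 by omega, show a+m+(j-a) = j+m by omega] at h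
    exact h
  have hlenW' : W'.length = W.length + 1 := by
    rw [hW']; exact List.length_insertIdx_of_le_length hbW _
  have hlt : ∀ j, j < b → W'[j]? = W[j]? := by
    intro j hj
    have hjW : j < W.length := by omega
    have hjW' : j < W'.length := by omega
    rw [List.getElem?_eq_getElem hjW', List.getElem?_eq_getElem hjW]
    exact congrArg some (List.getElem_insertIdx_of_lt hj hjW')
  have hself : W'[b]? = some c := by
    have hbW' : b < W'.length := by omega
    rw [List.getElem?_eq_getElem hbW']
    exact congrArg some (List.getElem_insertIdx_self hbW')
  have hgt : ∀ j, b < j → j ≤ W.length → W'[j]? = W[j-1]? := by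
    intro j hj hjW
    obtain ⟨k, rfl⟩ : ∃ k, j = b + k + 1 := ⟨j - b - 1, by omega⟩
    rw [show b+k+1-1 = b+k by omega]
    have h1 : b + k + 1 < W'.length := by omega
    have h2 : b + k < W.length := by omega
    rw [List.getElem?_eq_getElem h1, List.getElem?_eq_getElem h2]
    exact congrArg some (List.getElem_insertIdx_add_succ W c b k (by omega))
  by_cases hsign : b + 2 ≤ a + (m+1)
  · -- plus defect
    have hb3 : b + 3 ≤ a + (m+1) := by
      by_contra hc
      refine sqrun' hns (s := a) (r := m) ha hm (by omega) ?_
      intro k hk1 hk2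
      have h := E1 k hk1 (by omega)
      rw [hlt (k-1) (by omega), hgt (k+m) (by omega) (by omega)] at h
      exact h
    refine Or.inl ⟨hsign, ⟨ha, by omega, by omega, by omega, ?_, ?_⟩, ?_⟩
    · -- hX
      intro k hk1 hk2
      have h := E1 k hk1 (by omega)
      rw [hlt (k-1) (by omega), hgt (k+m) (by omega) (by omega)] at h
      exact h
    · -- hY
      intro k hk1 hk2
      have h := E1 (k+1) (by omega) (by omega)
      simp only [Nat.add_sub_cancel] at h
      rw [hgt k (by omega) (by omega), hgt (k+1+m) (by omega) (by omega),
        show k+1+m-1 = k+m by omega] at h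
      simp only [Nat.add_sub_cancel]
      exact h
    · -- letter c
      have h := E1 (b+1) hab (by omega)
      simp only [Nat.add_sub_cancel] at h
      rw [hself, hgt (b+1+m) (by omega) (by omega), show b+1+m-1 = b+m by omega] at h
      exact h.symm
  · -- minus defect
    have hub : b ≤ a + 2*m := by
      by_contra hc
      refine sqrun' hns (s := a) (r := m+1) ha (by omega) (by omega) ?_
      intro k hk1 hk2
      have h := E1 k hk1 (by omega)
      rw [hlt (k-1) (by omega), hlt (k+m) (by omega)] at h
      rw [show k+(m+1)-1 = k+m by omega]
      exact h
    have hlb : a + m + 1 ≤ b := by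
      by_contra hc
      refine sqrun' hns (s := a+1) (r := m) (by omega) hm (by omega) ?_
      intro k hk1 hk2
      have h := E1 k (by omega) (by omega)
      rw [hlt (k-1) (by omega), hgt (k+m) (by omega) (by omega)] at h
      exact h
    obtain ⟨p, hp⟩ : ∃ p, p + m = b := ⟨b - m, by omega⟩
    refine Or.inr ⟨p, hp, ⟨ha, by omega, by omega, by omega, ?_, ?_⟩, ?_, hsign⟩
    · -- hY
      intro k hk1 hk2
      have h := E1 k (by omega) (by omega)
      rw [hlt (k-1) (by omega), hlt (k+m) (by omega)] at h
      simp only [Nat.add_sub_cancel]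
      exact h
    · -- hX
      intro k hk1 hk2
      have h := E1 k (by omega) (by omega)
      rw [hlt (k-1) (by omega), hgt (k+m) (by omega) (by omega)] at h
      exact h
    · -- letter c
      have h := E1 p (by omega) (by omega)
      rw [hlt (p-1) (by omega), hp, hself] at h
      exact h


end SC

/-- Counting bound: in an `n`-letter square-free word, a family of square-completing
quadruples, no two of which share the same pair `(b, c)`, contains at most `2n / (L - 1)`
quadruples with length parameter equal to `L`, for each `L ≥ 2`. -/
theorem count_square_completing_fixed_length {α : Type*} (W : List α) (n : ℕ)
    (hn : W.length = n) (hW : SquareFree W)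
    (A : Finset (ℕ × ℕ × ℕ × α))
    (hA : ∀ q ∈ A, SquareCompleting W q.1 q.2.1 q.2.2.1 q.2.2.2)
    (hbc : ∀ q ∈ A, ∀ q' ∈ A, q.2.2.1 = q'.2.2.1 → q.2.2.2 = q'.2.2.2 → q = q')
    (L : ℕ) (hL : 2 ≤ L) :
    (((A.filter (fun q => q.2.1 = L)).card : ℝ)) ≤ 2 * n / ((L : ℝ) - 1) := by
  subst hn
  obtain ⟨m, rfl⟩ : ∃ m, L = m + 1 := ⟨L - 1, by omega⟩
  have hm : 1 ≤ m := by omega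
  classical
  set w : ℕ → Option α := fun k => W[k-1]? with hw
  have hns : SC.NoSq W.length w := SC.nosq_of_squareFree hW
  set S := A.filter (fun q => q.2.1 = m + 1) with hS
  set Iv : ℕ × ℕ × ℕ × α → Finset ℕ := fun q =>
    if q.2.2.1 + 2 ≤ q.1 + (m+1) then Finset.Icc (q.2.2.1+1) (q.2.2.1+m)
    else Finset.Icc (q.2.2.1+1-m) q.2.2.1 with hIv
  have hext : ∀ q ∈ S,
      (q.2.2.1 + 2 ≤ q.1 + (m+1) ∧ SC.PlusD W.length m w q.1 (q.2.2.1+m+1)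
        ∧ W[q.2.2.1+m]? = some q.2.2.2)
      ∨ (∃ p, p + m = q.2.2.1 ∧ SC.MinusD W.length m w q.1 p ∧ W[p-1]? = some q.2.2.2
          ∧ ¬(q.2.2.1 + 2 ≤ q.1 + (m+1))) := by
    intro q hq
    obtain ⟨hqA, hqL⟩ := Finset.mem_filter.mp hq
    have h := hA q hqA
    rw [hqL] at h
    exact SC.extract hns hm h
  have key : ∀ t : ℕ, ∀ u ∈ S.filter (fun q => t ∈ Iv q),
      ∃ (s : Bool) (p : ℕ),
        (if s then SC.PlusD W.length m w u.1 p else SC.MinusD W.length m w u.1 p) ∧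
        (if s then (p ≤ t + m ∧ t + 1 ≤ p) else (p + 1 ≤ t ∧ t ≤ p + m)) ∧
        (if s then u.2.2.1 + m + 1 = p else p + m = u.2.2.1) ∧
        W[p-1]? = some u.2.2.2 := by
    intro t u hu
    obtain ⟨huS, hut⟩ := Finset.mem_filter.mp hu
    rcases hext u huS with ⟨hsgn, hP, hc⟩ | ⟨p, hp, hD, hc, hsgn⟩
    · refine ⟨true, u.2.2.1+m+1, by simpa using hP, ?_, by simp, by simpa using hc⟩
      simp only [if_true]
      simp only [hIv, if_pos hsgn, Finset.mem_Icc] at hut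
      omega
    · refine ⟨false, p, by simpa using hD, ?_, by simpa using hp, hc⟩
      simp only [Bool.false_eq_true, if_false]
      simp only [hIv, if_neg hsgn, Finset.mem_Icc] at hut
      omega
  have hcov : ∀ t, (S.filter (fun q => t ∈ Iv q)).card ≤ 2 := by
    intro t
    by_contra hc2
    have h3 : 2 < (S.filter (fun q => t ∈ Iv q)).card := by omega
    obtain ⟨x, y, z, hx, hy, hz, hxy, hxz, hyz⟩ := Finset.two_lt_card_iff.mp h3
    obtain ⟨sx, px, hPx, hcx, hbx, hwx⟩ := key t x hx
    obtain ⟨sy, py, hPy, hcy, hby, hwy⟩ := key t y hy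
    obtain ⟨sz, pz, hPz, hcz, hbz, hwz⟩ := key t z hz
    have hSA : ∀ u, u ∈ S.filter (fun q => t ∈ Iv q) → u ∈ A := fun u hu =>
      Finset.mem_of_mem_filter u (Finset.mem_filter.mp hu).1
    have hne : ∀ u v : ℕ × ℕ × ℕ × α, u ∈ A → v ∈ A → ∀ (su sv : Bool) (pu pv : ℕ),
        (if su then u.2.2.1 + m + 1 = pu else pu + m = u.2.2.1) →
        (if sv then v.2.2.1 + m + 1 = pv else pv + m = v.2.2.1) →
        W[pu-1]? = some u.2.2.2 → W[pv-1]? = some v.2.2.2 →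
        u ≠ v → su = sv → pu ≠ pv := by
      intro u v hu hv su sv pu pv h1 h2 w1 w2 huv hss hpp
      subst hss; subst hpp
      have hb : u.2.2.1 = v.2.2.1 := by
        cases su <;> simp only [if_true, Bool.false_eq_true, if_false] at h1 h2 <;> omega
      have hcc : u.2.2.2 = v.2.2.2 := Option.some.inj (w1.symm.trans w2)
      exact huv (hbc u hu v hv hb hcc)
    exact SC.noThree hns hm t sx sy sz x.1 px y.1 py z.1 pz hPx hPy hPz hcx hcy hcz
      (hne x y (hSA x hx) (hSA y hy) sx sy px py hbx hby hwx hwy hxy)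
      (hne x z (hSA x hx) (hSA z hz) sx sz px pz hbx hbz hwx hwz hxz)
      (hne y z (hSA y hy) (hSA z hz) sy sz py pz hby hbz hwy hwz hyz)
  have hcard : ∀ q ∈ S, (Iv q).card = m := by
    intro q hq
    rcases hext q hq with ⟨hsgn, hP, _⟩ | ⟨p, hp, hD, _, hsgn⟩
    · rw [hIv]
      simp only [if_pos hsgn, Nat.card_Icc]
      omega
    · rw [hIv]
      simp only [if_neg hsgn, Nat.card_Icc]
      have h1 := hD.hap
      have h2 := hD.ha
      omega
  have hsub : ∀ q ∈ S, Iv q ⊆ Finset.Icc 1 W.length := by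
    intro q hq
    rcases hext q hq with ⟨hsgn, hP, _⟩ | ⟨p, hp, hD, _, hsgn⟩
    · intro t ht
      simp only [hIv, if_pos hsgn, Finset.mem_Icc] at ht
      rw [Finset.mem_Icc]
      have h1 := hP.hn2
      have h2 := hP.hq2
      omega
    · intro t ht
      simp only [hIv, if_neg hsgn, Finset.mem_Icc] at ht
      rw [Finset.mem_Icc]
      have h1 := hD.hn2
      have h2 := hD.hpm
      have h3 := hD.hap
      have h4 := hD.ha
      omega
  have hsum : m * S.card ≤ 2 * W.length := by
    have h1 : ∀ q ∈ S, (Iv q).card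
        = ∑ t ∈ Finset.Icc 1 W.length, (if t ∈ Iv q then 1 else 0) := by
      intro q hq
      rw [Finset.sum_ite_mem, Finset.inter_eq_right.mpr (hsub q hq)]
      exact Finset.card_eq_sum_ones _
    calc m * S.card
        = ∑ _q ∈ S, m := by rw [Finset.sum_const, smul_eq_mul, mul_comm]
      _ = ∑ q ∈ S, (Iv q).card := (Finset.sum_congr rfl hcard).symm
      _ = ∑ q ∈ S, ∑ t ∈ Finset.Icc 1 W.length, (if t ∈ Iv q then 1 else 0) :=
          Finset.sum_congr rfl h1
      _ = ∑ t ∈ Finset.Icc 1 W.length, ∑ q ∈ S, (if t ∈ Iv q then 1 else 0) :=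
          Finset.sum_comm
      _ = ∑ t ∈ Finset.Icc 1 W.length, (S.filter (fun q => t ∈ Iv q)).card :=
          Finset.sum_congr rfl (fun t _ => (Finset.card_filter _ _).symm)
      _ ≤ ∑ _t ∈ Finset.Icc 1 W.length, 2 := Finset.sum_le_sum fun t _ => hcov t
      _ = 2 * W.length := by
          rw [Finset.sum_const, Nat.card_Icc, smul_eq_mul]
          omega
  have hpos : (0:ℝ) < ((m + 1 : ℕ) : ℝ) - 1 := by
    have : (1:ℝ) ≤ (m:ℝ) := by exact_mod_cast hm
    push_cast
    linarith
  rw [le_div_iff₀ hpos, show ((m + 1 : ℕ) : ℝ) - 1 = ((m : ℕ) : ℝ) by push_cast; ring]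
  have hfin : S.card * m ≤ 2 * W.length := by simpa [Nat.mul_comm] using hsum
  exact_mod_cast hfin
end

section
/- Let W be an n-letter square-free word, let L ≥ 300 be an integer, let x be an integer, and let ℬ be a set of square-completing quadruples (a, ℓ, b, c) in W, no two of which share the same pair (b, c), such that every quadruple in ℬ has sign 1, length parameter ℓ satisfying L ≤ ℓ < 7L/6, and starting index a satisfying x ≤ a < x + L/6. Then |ℬ| ≤ 7. The same bound holds if every quadruple in ℬ has sign −1 instead. -/
namespace CSCaux

open List

variable {α : Type*}

lemma getElem?_ins_lt (W : List α) (b : ℕ) (c : α) (hb : b ≤ W.length) (t : ℕ) (ht : t < b) :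
    (W.insertIdx b c)[t]? = W[t]? := by
  have h : t < W.length := lt_of_lt_of_le ht hb
  have h' : t < (W.insertIdx b c).length := by
    rw [List.length_insertIdx_of_le_length hb]; omega
  rw [getElem?_eq_getElem h', getElem?_eq_getElem h]
  exact congrArg some (List.getElem_insertIdx_of_lt ht h')

lemma getElem?_ins_self (W : List α) (b : ℕ) (c : α) (hb : b ≤ W.length) :
    (W.insertIdx b c)[b]? = some c := by
  have h' : b < (W.insertIdx b c).length := by
    rw [List.length_insertIdx_of_le_length hb]; omega
  rw [getElem?_eq_getElem h']
  exact congrArg some (List.getElem_insertIdx_self h')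

lemma getElem?_ins_gt (W : List α) (b : ℕ) (c : α) (hb : b ≤ W.length) (k : ℕ) :
    (W.insertIdx b c)[b + k + 1]? = W[b + k]? := by
  have hlen : (W.insertIdx b c).length = W.length + 1 := List.length_insertIdx_of_le_length hb c
  rcases lt_or_ge (b + k) W.length with h | h
  · have h' : b + k + 1 < (W.insertIdx b c).length := by omega
    rw [getElem?_eq_getElem h', getElem?_eq_getElem h]
    exact congrArg some (List.getElem_insertIdx_add_succ W c b k h)
  · rw [getElem?_eq_none (by omega), getElem?_eq_none (by omega)]

lemma no_run {W : List α} (hW : SquareFree W) {s p : ℕ} (hp : 0 < p)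
    (hsp : s + p ≤ W.length) (h : ∀ k, k < p → W[s + k]? = W[s + k + p]?) : False := by
  have h2 : s + 2 * p ≤ W.length := by
    by_contra hc
    push_neg at hc
    obtain ⟨k, hk, hk2⟩ : ∃ k, k < p ∧ s + k + p = W.length :=
      ⟨W.length - s - p, by omega, by omega⟩
    have h3 := h _ hk
    rw [hk2, getElem?_eq_none (le_refl _)] at h3
    rw [getElem?_eq_getElem (by omega)] at h3
    exact Option.some_ne_none _ h3
  set X := (W.drop s).take p with hX
  have hXlen : X.length = p := by
    simp only [hX, List.length_take, List.length_drop]; omega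
  have hkey : X ++ X = (W.drop s).take (2 * p) := by
    apply List.ext_getElem?
    intro i
    rw [List.getElem?_append]
    rcases lt_or_ge i p with hi | hi
    · rw [if_pos (by omega)]
      simp only [hX, List.getElem?_take, if_pos hi, if_pos (show i < 2*p by omega),
        List.getElem?_drop]
    · rw [if_neg (by omega)]
      rcases lt_or_ge i (2 * p) with hi2 | hi2
      · rw [hXlen]
        simp only [hX, List.getElem?_take, List.getElem?_drop, hXlen]
        rw [if_pos (by omega), if_pos (by omega)]
        have h4 := h (i - p) (by omega)
        rw [show s + (i - p) + p = s + i from by omega] at h4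
        exact h4
      · rw [getElem?_eq_none (by simp only [hXlen]; omega), getElem?_eq_none]
        simp only [List.length_take, List.length_drop]; omega
  have hinf : X ++ X <:+: W :=
    hkey ▸ ((List.take_prefix _ _).isInfix.trans (List.drop_suffix _ _).isInfix)
  refine hW X ?_ hinf
  intro h0
  rw [h0] at hXlen
  simp at hXlen
  omega

lemma exists_run_aux (u v q1 q2 : ℕ) (huv : u ≤ v + 1) (hq : q1 ≤ q2) :
    ∃ s e, u ≤ s ∧ s ≤ e ∧ e ≤ v + 1 ∧ v + 1 ≤ u + 3 * (e - s) + 2 ∧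
      (q1 < s ∨ e ≤ q1) ∧ (q2 < s ∨ e ≤ q2) := by
  rcases lt_or_ge q1 u with h1 | h1
  · rcases lt_or_ge q2 u with h2 | h2
    · exact ⟨u, v + 1, by omega, by omega, by omega, by omega, by omega, by omega⟩
    · rcases le_or_gt (v + 1) q2 with h3 | h3
      · exact ⟨u, v + 1, by omega, by omega, by omega, by omega, by omega, by omega⟩
      · rcases le_total (q2 - u) (v - q2) with h4 | h4
        · exact ⟨q2 + 1, v + 1, by omega, by omega, by omega, by omega, by omega, by omega⟩
        · exact ⟨u, q2, by omega, by omega, by omega, by omega, by omega, by omega⟩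
  · rcases le_or_gt (v + 1) q1 with h2 | h2
    · exact ⟨u, v + 1, by omega, by omega, by omega, by omega, by omega, by omega⟩
    · rcases le_or_gt (v + 1) q2 with h3 | h3
      · rcases le_total (q1 - u) (v - q1) with h4 | h4
        · exact ⟨q1 + 1, v + 1, by omega, by omega, by omega, by omega, by omega, by omega⟩
        · exact ⟨u, q1, by omega, by omega, by omega, by omega, by omega, by omega⟩
      · rcases eq_or_lt_of_le hq with he | he
        · subst he
          rcases le_total (q1 - u) (v - q1) with h4 | h4
          · exact ⟨q1 + 1, v + 1, by omega, by omega, by omega, by omega, by omega, by omega⟩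
          · exact ⟨u, q1, by omega, by omega, by omega, by omega, by omega, by omega⟩
        rcases le_total (q1 - u) (v - q2) with h4 | h4
        · rcases le_total (q2 - q1 - 1) (v - q2) with h5 | h5
          · exact ⟨q2 + 1, v + 1, by omega, by omega, by omega, by omega, by omega, by omega⟩
          · exact ⟨q1 + 1, q2, by omega, by omega, by omega, by omega, by omega, by omega⟩
        · rcases le_total (q2 - q1 - 1) (q1 - u) with h5 | h5
          · exact ⟨u, q1, by omega, by omega, by omega, by omega, by omega, by omega⟩
          · exact ⟨q1 + 1, q2, by omega, by omega, by omega, by omega, by omega, by omega⟩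

lemma exists_run (u v q1 q2 : ℕ) (huv : u ≤ v + 1) :
    ∃ s e, u ≤ s ∧ s ≤ e ∧ e ≤ v + 1 ∧ v + 1 ≤ u + 3 * (e - s) + 2 ∧
      (q1 < s ∨ e ≤ q1) ∧ (q2 < s ∨ e ≤ q2) := by
  rcases le_total q1 q2 with h | h
  · exact exists_run_aux u v q1 q2 huv h
  · obtain ⟨s, e, a1, a2, a3, a4, a5, a6⟩ := exists_run_aux u v q2 q1 huv h
    exact ⟨s, e, a1, a2, a3, a4, a6, a5⟩

lemma sign_pos_le {a ℓ b : ℕ} (h : scSign a ℓ b = 1) : b + 2 ≤ a + ℓ := by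
  by_contra hc
  unfold scSign at h
  rw [if_neg hc] at h
  norm_num at h

lemma sign_neg_le {a ℓ b : ℕ} (h : scSign a ℓ b = -1) : a + ℓ ≤ b + 1 := by
  by_contra hc
  unfold scSign at h
  rw [if_pos (by omega)] at h
  norm_num at h

lemma sc_core {W : List α} {a ℓ b : ℕ} {c : α} (hq : SquareCompleting W a ℓ b c) :
    ∀ j, j < ℓ → (W.insertIdx b c)[a - 1 + j]? = (W.insertIdx b c)[a - 1 + ℓ + j]? := by
  obtain ⟨ha, hl, hab, hbn, hsum, heq⟩ := hq
  intro j hj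
  unfold factor at heq
  rw [show a + ℓ - a = ℓ from by omega, show a + 2 * ℓ - (a + ℓ) = ℓ from by omega,
    show a + ℓ - 1 = a - 1 + ℓ from by omega] at heq
  have h2 := congrArg (fun l => l[j]?) heq
  simpa only [List.getElem?_take, if_pos hj, List.getElem?_drop] using h2

lemma pos_spec {W : List α} (hW : SquareFree W) {A m b : ℕ} {c : α}
    (hq : SquareCompleting W (A + 1) (m + 1) b c) (hsgn : b + 2 ≤ A + m + 2) (hm : 1 ≤ m) :
    A ≤ b ∧ b + 1 ≤ A + m ∧ A + 2 * m + 1 ≤ W.length ∧ b ≤ W.length ∧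
      (∀ Q, A ≤ Q → Q + 1 ≤ b → W[Q]? = W[Q + m]?) ∧
      (∀ Q, b ≤ Q → Q + 1 ≤ A + m → W[Q]? = W[Q + m + 1]?) ∧
      W[b + m]? = some c := by
  have H := sc_core hq
  simp only [Nat.add_sub_cancel] at H
  obtain ⟨ha, hl, hab, hbn, hsum, -⟩ := hq
  have hAb : A ≤ b := by omega
  have hbm : b ≤ A + m := by omega
  have hlen : A + 2 * m + 1 ≤ W.length := by omega
  have rel1 : ∀ Q, A ≤ Q → Q + 1 ≤ b → W[Q]? = W[Q + m]? := by
    intro Q h1 h2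
    have h3 := H (Q - A) (by omega)
    rw [show A + (Q - A) = Q from by omega,
        show A + (m + 1) + (Q - A) = b + (Q + m - b) + 1 from by omega] at h3
    rw [getElem?_ins_lt W b c hbn Q (by omega), getElem?_ins_gt W b c hbn] at h3
    rw [show b + (Q + m - b) = Q + m from by omega] at h3
    exact h3
  have rel2 : ∀ Q, b ≤ Q → Q + 1 ≤ A + m → W[Q]? = W[Q + m + 1]? := by
    intro Q h1 h2
    have h3 := H (Q + 1 - A) (by omega)
    rw [show A + (Q + 1 - A) = b + (Q - b) + 1 from by omega,
        show A + (m + 1) + (Q + 1 - A) = b + (Q + m + 1 - b) + 1 from by omega] at h3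
    rw [getElem?_ins_gt W b c hbn, getElem?_ins_gt W b c hbn] at h3
    rw [show b + (Q - b) = Q from by omega,
        show b + (Q + m + 1 - b) = Q + m + 1 from by omega] at h3
    exact h3
  have rel3 : W[b + m]? = some c := by
    have h3 := H (b - A) (by omega)
    rw [show A + (b - A) = b from by omega,
        show A + (m + 1) + (b - A) = b + m + 1 from by omega] at h3
    rw [getElem?_ins_self W b c hbn, getElem?_ins_gt W b c hbn] at h3
    exact h3.symm
  have hself : b + 1 ≤ A + m := by
    by_contra hcon
    have hb' : b = A + m := by omega
    exact no_run hW (show 0 < m by omega) (show A + m ≤ W.length by omega)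
      (fun k hk => rel1 (A + k) (by omega) (by omega))
  exact ⟨hAb, hself, hlen, hbn, rel1, rel2, rel3⟩

lemma neg_spec {W : List α} (hW : SquareFree W) {A m b : ℕ} {c : α}
    (hq : SquareCompleting W (A + 1) (m + 1) b c) (hsgn : A + m + 1 ≤ b) (hm : 1 ≤ m) :
    A + m + 2 ≤ b ∧ b ≤ A + 2 * m + 1 ∧ A + 2 * m + 1 ≤ W.length ∧ b ≤ W.length ∧
      (∀ Q, A ≤ Q → Q + m + 2 ≤ b → W[Q]? = W[Q + m + 1]?) ∧
      (∀ Q, b ≤ Q + m → Q ≤ A + m → W[Q]? = W[Q + m]?) ∧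
      W[b - m - 1]? = some c := by
  have H := sc_core hq
  simp only [Nat.add_sub_cancel] at H
  obtain ⟨ha, hl, hab, hbn, hsum, -⟩ := hq
  have hlen : A + 2 * m + 1 ≤ W.length := by omega
  have hbub : b ≤ A + 2 * m + 1 := by
    by_contra hcon
    push_neg at hcon
    refine no_run hW (show 0 < m + 1 by omega) (show A + (m + 1) ≤ W.length by omega) ?_
    intro k hk
    have h3 := H k hk
    rw [getElem?_ins_lt W b c hbn (A + k) (by omega),
        getElem?_ins_lt W b c hbn (A + (m + 1) + k) (by omega)] at h3
    rw [show A + (m + 1) + k = A + k + (m + 1) from by omega] at h3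
    exact h3
  have rel1 : ∀ Q, A ≤ Q → Q + m + 2 ≤ b → W[Q]? = W[Q + m + 1]? := by
    intro Q h1 h2
    have h3 := H (Q - A) (by omega)
    rw [show A + (Q - A) = Q from by omega,
        show A + (m + 1) + (Q - A) = Q + m + 1 from by omega] at h3
    rw [getElem?_ins_lt W b c hbn Q (by omega),
        getElem?_ins_lt W b c hbn (Q + m + 1) (by omega)] at h3
    exact h3
  have rel2 : ∀ Q, b ≤ Q + m → Q ≤ A + m → W[Q]? = W[Q + m]? := by
    intro Q h1 h2
    have hQA : A ≤ Q := by omega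
    have h3 := H (Q - A) (by omega)
    rw [show A + (Q - A) = Q from by omega,
        show A + (m + 1) + (Q - A) = b + (Q + m - b) + 1 from by omega] at h3
    rw [getElem?_ins_lt W b c hbn Q (by omega), getElem?_ins_gt W b c hbn] at h3
    rw [show b + (Q + m - b) = Q + m from by omega] at h3
    exact h3
  have rel3 : W[b - m - 1]? = some c := by
    have h3 := H (b - A - m - 1) (by omega)
    rw [show A + (b - A - m - 1) = b - m - 1 from by omega,
        show A + (m + 1) + (b - A - m - 1) = b from by omega] at h3
    rw [getElem?_ins_lt W b c hbn (b - m - 1) (by omega),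
        getElem?_ins_self W b c hbn] at h3
    exact h3
  have hself : A + m + 2 ≤ b := by
    by_contra hcon
    have hb' : b = A + m + 1 := by omega
    exact no_run hW (show 0 < m by omega) (show A + 1 + m ≤ W.length by omega)
      (fun k hk => by
        have h4 := rel2 (A + 1 + k) (by omega) (by omega)
        rwa [show A + 1 + k + m = A + 1 + k + m from rfl] at h4)
  exact ⟨hself, hbub, hlen, hbn, rel1, rel2, rel3⟩

lemma edge_pair_lem {W : List α} (hW : SquareFree W) {L A m A' : ℕ}
    (hL : 300 ≤ L) (hm : L ≤ m + 1) (hA : 6 * A' < 6 * A + L) (hAA : A < A')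
    (R : ∀ Q, A ≤ Q → Q + 1 ≤ A + m → W[Q]? = W[Q + m + 1]?)
    (R' : ∀ Q, A' ≤ Q → Q + 1 ≤ A' + m → W[Q]? = W[Q + m + 1]?)
    (hn : A + m + 1 ≤ W.length) : False := by
  have hA'm : A' ≤ A + m := by omega
  refine no_run hW (p := m + 1) (s := A) (by omega) (by omega) ?_
  intro k hk
  rcases lt_or_ge k m with h | h
  · have h1 := R (A + k) (by omega) (by omega)
    rwa [show A + k + m + 1 = A + k + (m + 1) from by omega] at h1
  · rw [show k = m from by omega]
    have h1 := R' (A + m) (by omega) (by omega)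
    rwa [show A + m + m + 1 = A + m + (m + 1) from by omega] at h1

lemma pos_same_lem {W : List α} (hW : SquareFree W) {L A m b A' b' : ℕ}
    (hL : 300 ≤ L) (hm : L ≤ m + 1) (hA : 6 * A' < 6 * A + L)
    (hbb : b < b') (hAb' : A' ≤ b') (hbm : b + 1 ≤ A + m)
    (rel2 : ∀ Q, b ≤ Q → Q + 1 ≤ A + m → W[Q]? = W[Q + m + 1]?)
    (rel1' : ∀ Q, A' ≤ Q → Q + 1 ≤ b' → W[Q]? = W[Q + m]?)
    (hn : A + 2 * m + 1 ≤ W.length) : b' = A' := by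
  by_contra hne
  have hAb'' : A' + 1 ≤ b' := by omega
  obtain ⟨hQ1, hQ2, hQ3⟩ : b ≤ max b A' ∧ A' ≤ max b A' ∧ (max b A' = b ∨ max b A' = A') :=
    ⟨le_max_left _ _, le_max_right _ _, max_choice _ _⟩
  have h1 : W[max b A']? = W[max b A' + m + 1]? := rel2 _ hQ1 (by omega)
  have h2 : W[max b A']? = W[max b A' + m]? := rel1' _ hQ2 (by omega)
  refine no_run hW (p := 1) (s := max b A' + m) one_pos (by omega) ?_
  intro k hk
  have hk0 : k = 0 := by omega
  subst hk0
  simpa using h2.symm.trans h1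

lemma neg_same_lem {W : List α} (hW : SquareFree W) {L A m b A' b' : ℕ}
    (hL : 300 ≤ L) (hm : L ≤ m + 1) (hA : 6 * A' < 6 * A + L)
    (hbb : b < b') (hab : A + m + 2 ≤ b) (hbub : b ≤ A + 2 * m + 1)
    (hab' : A' + m + 2 ≤ b') (hb'n : b' ≤ W.length)
    (rel2 : ∀ Q, b ≤ Q + m → Q ≤ A + m → W[Q]? = W[Q + m]?)
    (rel1' : ∀ Q, A' ≤ Q → Q + m + 2 ≤ b' → W[Q]? = W[Q + m + 1]?) :
    b' = b + 1 ∨ b = A + 2 * m + 1 := by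
  by_contra hc
  push_neg at hc
  obtain ⟨hc1, hc2⟩ := hc
  obtain ⟨hQ1, hQ2, hQ3⟩ : A' ≤ max A' (b - m) ∧ b - m ≤ max A' (b - m) ∧
      (max A' (b - m) = A' ∨ max A' (b - m) = b - m) :=
    ⟨le_max_left _ _, le_max_right _ _, max_choice _ _⟩
  have h1 : W[max A' (b - m)]? = W[max A' (b - m) + m]? := rel2 _ (by omega) (by omega)
  have h2 : W[max A' (b - m)]? = W[max A' (b - m) + m + 1]? := rel1' _ hQ1 (by omega)
  refine no_run hW (p := 1) (s := max A' (b - m) + m) one_pos (by omega) ?_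
  intro k hk
  have hk0 : k = 0 := by omega
  subst hk0
  simpa using h1.symm.trans h2

lemma pos_diff_lem {W : List α} (hW : SquareFree W) {L A m b A' m' b' : ℕ}
    (hL : 300 ≤ L) (hm : L ≤ m + 1) (hm' : 6 * (m' + 1) < 7 * L)
    (hA : 6 * A' < 6 * A + L) (hA' : 6 * A < 6 * A' + L) (hd : m + 2 ≤ m')
    (R : ∀ Q, A ≤ Q → Q + 1 ≤ A + m → W[Q]? = W[Q + m + (if b ≤ Q then 1 else 0)]?)
    (R' : ∀ Q, A' ≤ Q → Q + 1 ≤ A' + m' → W[Q]? = W[Q + m' + (if b' ≤ Q then 1 else 0)]?)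
    (hn : A + 2 * m + 1 ≤ W.length) (hn' : A' + 2 * m' + 1 ≤ W.length) : False := by
  obtain ⟨hu1, hu2, hu3⟩ : A ≤ max A A' ∧ A' ≤ max A A' ∧ (max A A' = A ∨ max A A' = A') :=
    ⟨le_max_left _ _, le_max_right _ _, max_choice _ _⟩
  obtain ⟨hv1, hv2, hv3⟩ : min (A + m - 1) (A' + m' - 1) ≤ A + m - 1 ∧
      min (A + m - 1) (A' + m' - 1) ≤ A' + m' - 1 ∧
      (min (A + m - 1) (A' + m' - 1) = A + m - 1 ∨
        min (A + m - 1) (A' + m' - 1) = A' + m' - 1) :=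
    ⟨min_le_left _ _, min_le_right _ _, min_choice _ _⟩
  obtain ⟨s, e, hs1, hs2, hs3, hs4, hq1, hq2⟩ :=
    exists_run (max A A') (min (A + m - 1) (A' + m' - 1)) b b' (by omega)
  have hes : m' - m + 2 ≤ e - s := by omega
  have Rrun : ∀ i, s ≤ i → i < e → W[i]? = W[i + (m + (if b ≤ s then 1 else 0))]? := by
    intro i h1 h2
    have h3 := R i (by omega) (by omega)
    have h4 : (if b ≤ i then 1 else 0) = (if b ≤ s then 1 else 0) := by
      rcases hq1 with h | h
      · rw [if_pos (by omega), if_pos (by omega)]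
      · rw [if_neg (by omega), if_neg (by omega)]
    rw [h4] at h3
    rw [show i + m + (if b ≤ s then 1 else 0) = i + (m + (if b ≤ s then 1 else 0)) from
      by omega] at h3
    exact h3
  have R'run : ∀ i, s ≤ i → i < e → W[i]? = W[i + (m' + (if b' ≤ s then 1 else 0))]? := by
    intro i h1 h2
    have h3 := R' i (by omega) (by omega)
    have h4 : (if b' ≤ i then 1 else 0) = (if b' ≤ s then 1 else 0) := by
      rcases hq2 with h | h
      · rw [if_pos (by omega), if_pos (by omega)]
      · rw [if_neg (by omega), if_neg (by omega)]
    rw [h4] at h3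
    rw [show i + m' + (if b' ≤ s then 1 else 0) = i + (m' + (if b' ≤ s then 1 else 0)) from
      by omega] at h3
    exact h3
  have hob : m ≤ m + (if b ≤ s then 1 else 0) ∧ m + (if b ≤ s then 1 else 0) ≤ m + 1 := by
    constructor <;> (split <;> omega)
  have hob' : m' ≤ m' + (if b' ≤ s then 1 else 0) ∧
      m' + (if b' ≤ s then 1 else 0) ≤ m' + 1 := by
    constructor <;> (split <;> omega)
  set o := m + (if b ≤ s then 1 else 0) with ho
  set o' := m' + (if b' ≤ s then 1 else 0) with ho'
  refine no_run hW (p := o' - o) (s := s + o) (by omega) (by omega) ?_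
  intro k hk
  have h1 := Rrun (s + k) (by omega) (by omega)
  have h2 := R'run (s + k) (by omega) (by omega)
  rw [show s + k + o = s + o + k from by omega] at h1
  rw [show s + k + o' = s + o + k + (o' - o) from by omega] at h2
  exact h1.symm.trans h2

lemma neg_diff_lem {W : List α} (hW : SquareFree W) {L A m b A' m' b' : ℕ}
    (hL : 300 ≤ L) (hm : L ≤ m + 1) (hm' : 6 * (m' + 1) < 7 * L)
    (hA : 6 * A' < 6 * A + L) (hA' : 6 * A < 6 * A' + L) (hd : m + 2 ≤ m')
    (hab : A + m + 2 ≤ b) (hbub : b ≤ A + 2 * m + 1)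
    (hab' : A' + m' + 2 ≤ b') (hbub' : b' ≤ A' + 2 * m' + 1)
    (hbn : b ≤ W.length) (hbn' : b' ≤ W.length)
    (R : ∀ Q, A ≤ Q → Q ≤ A + m → Q + m + 1 ≠ b →
      W[Q]? = W[Q + m + (if Q + m + 1 < b then 1 else 0)]?)
    (R' : ∀ Q, A' ≤ Q → Q ≤ A' + m' → Q + m' + 1 ≠ b' →
      W[Q]? = W[Q + m' + (if Q + m' + 1 < b' then 1 else 0)]?)
    (hn : A + 2 * m + 1 ≤ W.length) (hn' : A' + 2 * m' + 1 ≤ W.length) : False := by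
  obtain ⟨hu1, hu2, hu3⟩ : A ≤ max A A' ∧ A' ≤ max A A' ∧ (max A A' = A ∨ max A A' = A') :=
    ⟨le_max_left _ _, le_max_right _ _, max_choice _ _⟩
  obtain ⟨hv1, hv2, hv3⟩ : min (A + m) (A' + m') ≤ A + m ∧
      min (A + m) (A' + m') ≤ A' + m' ∧
      (min (A + m) (A' + m') = A + m ∨ min (A + m) (A' + m') = A' + m') :=
    ⟨min_le_left _ _, min_le_right _ _, min_choice _ _⟩
  obtain ⟨s, e, hs1, hs2, hs3, hs4, hq1, hq2⟩ :=
    exists_run (max A A') (min (A + m) (A' + m')) (b - m - 1) (b' - m' - 1) (by omega)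
  have hes : m' - m + 2 ≤ e - s := by omega
  have Rrun : ∀ i, s ≤ i → i < e → W[i]? = W[i + (m + (if s + m + 1 < b then 1 else 0))]? := by
    intro i h1 h2
    have h3 := R i (by omega) (by omega) (by rcases hq1 with h | h <;> omega)
    have h4 : (if i + m + 1 < b then 1 else 0) = (if s + m + 1 < b then 1 else 0) := by
      rcases hq1 with h | h
      · rw [if_neg (by omega), if_neg (by omega)]
      · rw [if_pos (by omega), if_pos (by omega)]
    rw [h4] at h3
    rw [show i + m + (if s + m + 1 < b then 1 else 0) =
      i + (m + (if s + m + 1 < b then 1 else 0)) from by omega] at h3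
    exact h3
  have R'run : ∀ i, s ≤ i → i < e →
      W[i]? = W[i + (m' + (if s + m' + 1 < b' then 1 else 0))]? := by
    intro i h1 h2
    have h3 := R' i (by omega) (by omega) (by rcases hq2 with h | h <;> omega)
    have h4 : (if i + m' + 1 < b' then 1 else 0) = (if s + m' + 1 < b' then 1 else 0) := by
      rcases hq2 with h | h
      · rw [if_neg (by omega), if_neg (by omega)]
      · rw [if_pos (by omega), if_pos (by omega)]
    rw [h4] at h3
    rw [show i + m' + (if s + m' + 1 < b' then 1 else 0) =
      i + (m' + (if s + m' + 1 < b' then 1 else 0)) from by omega] at h3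
    exact h3
  have hob : m ≤ m + (if s + m + 1 < b then 1 else 0) ∧
      m + (if s + m + 1 < b then 1 else 0) ≤ m + 1 := by
    constructor <;> (split <;> omega)
  have hob' : m' ≤ m' + (if s + m' + 1 < b' then 1 else 0) ∧
      m' + (if s + m' + 1 < b' then 1 else 0) ≤ m' + 1 := by
    constructor <;> (split <;> omega)
  have hsp : s + (m' + (if s + m' + 1 < b' then 1 else 0)) ≤ W.length := by
    by_cases hcc : s + m' + 1 < b'
    · rw [if_pos hcc]; omega
    · rw [if_neg hcc]; omega
  set o := m + (if s + m + 1 < b then 1 else 0) with ho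
  set o' := m' + (if s + m' + 1 < b' then 1 else 0) with ho'
  refine no_run hW (p := o' - o) (s := s + o) (by omega) (by omega) ?_
  intro k hk
  have h1 := Rrun (s + k) (by omega) (by omega)
  have h2 := R'run (s + k) (by omega) (by omega)
  rw [show s + k + o = s + o + k from by omega] at h1
  rw [show s + k + o' = s + o + k + (o' - o) from by omega] at h2
  exact h1.symm.trans h2


lemma three_chain {b1 b2 b3 : ℕ} (h12 : b1 ≠ b2) (h13 : b1 ≠ b3) (h23 : b2 ≠ b3)
    (K12 : b2 = b1 + 1 ∨ b1 = b2 + 1) (K13 : b3 = b1 + 1 ∨ b1 = b3 + 1)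
    (K23 : b3 = b2 + 1 ∨ b2 = b3 + 1) : False := by
  rcases K12 with h | h <;> rcases K13 with h' | h' <;> rcases K23 with h'' | h'' <;> omega

lemma main_pos {α : Type*} (W : List α) (hW : SquareFree W)
    (L : ℕ) (hL : 300 ≤ L)
    (B : Finset (ℕ × ℕ × ℕ × α))
    (hB : ∀ q ∈ B, SquareCompleting W q.1 q.2.1 q.2.2.1 q.2.2.2)
    (hbc : ∀ q ∈ B, ∀ q' ∈ B, q.2.2.1 = q'.2.2.1 → q.2.2.2 = q'.2.2.2 → q = q')
    (hw1 : ∀ q ∈ B, L ≤ q.2.1) (hw2 : ∀ q ∈ B, 6 * q.2.1 < 7 * L)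
    (hw3 : ∀ q ∈ B, ∀ q' ∈ B, 6 * q'.1 < 6 * q.1 + L)
    (hsg : ∀ q ∈ B, scSign q.1 q.2.1 q.2.2.1 = 1) :
    B.card ≤ 7 := by
  classical
  have spec : ∀ q ∈ B, ∃ A m, q.1 = A + 1 ∧ q.2.1 = m + 1 ∧ 1 ≤ m ∧
      A ≤ q.2.2.1 ∧ q.2.2.1 + 1 ≤ A + m ∧ A + 2 * m + 1 ≤ W.length ∧ q.2.2.1 ≤ W.length ∧
      (∀ Q, A ≤ Q → Q + 1 ≤ q.2.2.1 → W[Q]? = W[Q + m]?) ∧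
      (∀ Q, q.2.2.1 ≤ Q → Q + 1 ≤ A + m → W[Q]? = W[Q + m + 1]?) ∧
      W[q.2.2.1 + m]? = some q.2.2.2 := by
    intro q hq
    have hsc := hB q hq
    have h1 : 1 ≤ q.1 := hsc.1
    have h2 : 1 ≤ q.2.1 := hsc.2.1
    have hm : 1 ≤ q.2.1 - 1 := by have := hw1 q hq; omega
    have hsgn := sign_pos_le (hsg q hq)
    rw [show q.1 = (q.1 - 1) + 1 from by omega,
        show q.2.1 = (q.2.1 - 1) + 1 from by omega] at hsc
    obtain ⟨c1, c2, c3, c4, c5, c6, c7⟩ := pos_spec hW hsc (by omega) hm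
    exact ⟨q.1 - 1, q.2.1 - 1, by omega, by omega, hm, c1, c2, c3, c4, c5, c6, c7⟩
  have hdiff : ∀ q ∈ B, ∀ q' ∈ B, q.2.1 + 2 ≤ q'.2.1 → False := by
    intro q hq q' hq' hd
    obtain ⟨A, m, e1, e2, hm1, s1, s2, s3, s4, r1, r2, r3⟩ := spec q hq
    obtain ⟨A', m', e1', e2', hm1', s1', s2', s3', s4', r1', r2', r3'⟩ := spec q' hq'
    have h1 := hw1 q hq
    have h2 := hw2 q' hq'
    have h3 := hw3 q hq q' hq'
    have h4 := hw3 q' hq' q hq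
    refine pos_diff_lem (b := q.2.2.1) (b' := q'.2.2.1) hW hL
      (show L ≤ m + 1 from by omega)
      (show 6 * (m' + 1) < 7 * L from by omega)
      (show 6 * A' < 6 * A + L from by omega) (show 6 * A < 6 * A' + L from by omega)
      (show m + 2 ≤ m' from by omega) ?_ ?_ s3 s3'
    · intro Q hQ1 hQ2
      by_cases hb : q.2.2.1 ≤ Q
      · rw [if_pos hb]; exact r2 Q hb hQ2
      · rw [if_neg hb, Nat.add_zero]; exact r1 Q hQ1 (by omega)
    · intro Q hQ1 hQ2
      by_cases hb : q'.2.2.1 ≤ Q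
      · rw [if_pos hb]; exact r2' Q hb hQ2
      · rw [if_neg hb, Nat.add_zero]; exact r1' Q hQ1 (by omega)
  have pairEq : ∀ q ∈ B, ∀ q' ∈ B, q.2.1 = q'.2.1 → q.2.2.1 = q'.2.2.1 → q = q' := by
    intro q hq q' hq' hl hb
    obtain ⟨A, m, e1, e2, hm1, s1, s2, s3, s4, r1, r2, r3⟩ := spec q hq
    obtain ⟨A', m', e1', e2', hm1', s1', s2', s3', s4', r1', r2', r3'⟩ := spec q' hq'
    have hmm : m = m' := by omega
    refine hbc q hq q' hq' hb (Option.some.inj ?_)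
    rw [← r3, ← r3', hb, hmm]
  have pairOrd : ∀ q ∈ B, ∀ q' ∈ B, q.2.1 = q'.2.1 → q.2.2.1 < q'.2.2.1 →
      q'.2.2.1 + 1 = q'.1 := by
    intro q hq q' hq' hl hblt
    obtain ⟨A, m, e1, e2, hm1, s1, s2, s3, s4, r1, r2, r3⟩ := spec q hq
    obtain ⟨A', m', e1', e2', hm1', s1', s2', s3', s4', r1', r2', r3'⟩ := spec q' hq'
    have hmm : m' = m := by omega
    rw [hmm] at r1'
    have h1 := hw1 q hq
    have h3 := hw3 q hq q' hq'
    have hres := pos_same_lem hW hL (show L ≤ m + 1 from by omega)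
      (show 6 * A' < 6 * A + L from by omega) hblt s1' s2 r2 r1' s3
    omega
  have pairEdge : ∀ q ∈ B, ∀ q' ∈ B, q.2.1 = q'.2.1 → q.2.2.1 + 1 = q.1 →
      q'.2.2.1 + 1 = q'.1 → q = q' := by
    intro q hq q' hq' hl he he'
    rcases eq_or_ne q.2.2.1 q'.2.2.1 with hb | hb
    · exact pairEq q hq q' hq' hl hb
    exfalso
    obtain ⟨A, m, e1, e2, hm1, s1, s2, s3, s4, r1, r2, r3⟩ := spec q hq
    obtain ⟨A', m', e1', e2', hm1', s1', s2', s3', s4', r1', r2', r3'⟩ := spec q' hq'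
    have hmm : m' = m := by omega
    rw [hmm] at r2'
    rcases lt_or_gt_of_ne (show A ≠ A' from by omega) with h | h
    · exact edge_pair_lem hW hL (show L ≤ m + 1 from by have := hw1 q hq; omega)
        (show 6 * A' < 6 * A + L from by have := hw3 q hq q' hq'; omega) h
        (fun Q hQ1 hQ2 => r2 Q (by omega) hQ2)
        (fun Q hQ1 hQ2 => r2' Q (by omega) hQ2)
        (by omega)
    · exact edge_pair_lem hW hL (show L ≤ m + 1 from by have := hw1 q hq; omega)
        (show 6 * A < 6 * A' + L from by have := hw3 q' hq' q hq; omega) h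
        (fun Q hQ1 hQ2 => r2' Q (by omega) hQ2)
        (fun Q hQ1 hQ2 => r2 Q (by omega) hQ2)
        (by omega)
  have fiber : ∀ l0, (B.filter (fun q => q.2.1 = l0)).card ≤ 3 := by
    intro l0
    have hE : ((B.filter (fun q => q.2.1 = l0)).filter
        (fun q => q.2.2.1 + 1 = q.1)).card ≤ 1 := by
      rw [Finset.card_le_one]
      intro q hq q' hq'
      rw [Finset.mem_filter, Finset.mem_filter] at hq hq'
      exact pairEdge q hq.1.1 q' hq'.1.1 (by rw [hq.1.2, hq'.1.2]) hq.2 hq'.2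
    have hN : ((B.filter (fun q => q.2.1 = l0)).filter
        (fun q => ¬(q.2.2.1 + 1 = q.1))).card ≤ 1 := by
      rw [Finset.card_le_one]
      intro q hq q' hq'
      rw [Finset.mem_filter, Finset.mem_filter] at hq hq'
      by_contra hne
      have hbne : q.2.2.1 ≠ q'.2.2.1 := fun h =>
        hne (pairEq q hq.1.1 q' hq'.1.1 (by rw [hq.1.2, hq'.1.2]) h)
      rcases lt_or_gt_of_ne hbne with h | h
      · exact hq'.2 (pairOrd q hq.1.1 q' hq'.1.1 (by rw [hq.1.2, hq'.1.2]) h)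
      · exact hq.2 (pairOrd q' hq'.1.1 q hq.1.1 (by rw [hq'.1.2, hq.1.2]) h)
    have hsub : B.filter (fun q => q.2.1 = l0) ⊆
        ((B.filter (fun q => q.2.1 = l0)).filter (fun q => q.2.2.1 + 1 = q.1)) ∪
        ((B.filter (fun q => q.2.1 = l0)).filter (fun q => ¬(q.2.2.1 + 1 = q.1))) := by
      intro q hq
      have hq2 := Finset.mem_filter.1 hq
      simp only [Finset.mem_union, Finset.mem_filter]
      by_cases he : q.2.2.1 + 1 = q.1
      · exact Or.inl ⟨hq2, he⟩
      · exact Or.inr ⟨hq2, he⟩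
    have hcu := Finset.card_union_le
      ((B.filter (fun q => q.2.1 = l0)).filter (fun q => q.2.2.1 + 1 = q.1))
      ((B.filter (fun q => q.2.1 = l0)).filter (fun q => ¬(q.2.2.1 + 1 = q.1)))
    have hcs := Finset.card_le_card hsub
    omega
  rcases Finset.eq_empty_or_nonempty B with hBe | hBne
  · simp [hBe]
  obtain ⟨q0, hq0, hq0min⟩ := Finset.exists_min_image B (fun q => q.2.1) hBne
  have hmem : ∀ q ∈ B, q.2.1 = q0.2.1 ∨ q.2.1 = q0.2.1 + 1 := by
    intro q hq
    have h1 := hq0min q hq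
    have h2 : ¬(q0.2.1 + 2 ≤ q.2.1) := fun h => hdiff q0 hq0 q hq h
    omega
  have hsub : B ⊆ (B.filter (fun q => q.2.1 = q0.2.1)) ∪
      (B.filter (fun q => q.2.1 = q0.2.1 + 1)) := by
    intro q hq
    rw [Finset.mem_union, Finset.mem_filter, Finset.mem_filter]
    rcases hmem q hq with h | h
    · exact Or.inl ⟨hq, h⟩
    · exact Or.inr ⟨hq, h⟩
  have hcu := Finset.card_union_le (B.filter (fun q => q.2.1 = q0.2.1))
    (B.filter (fun q => q.2.1 = q0.2.1 + 1))
  have hcs := Finset.card_le_card hsub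
  have f1 := fiber q0.2.1
  have f2 := fiber (q0.2.1 + 1)
  omega

lemma main_neg {α : Type*} (W : List α) (hW : SquareFree W)
    (L : ℕ) (hL : 300 ≤ L)
    (B : Finset (ℕ × ℕ × ℕ × α))
    (hB : ∀ q ∈ B, SquareCompleting W q.1 q.2.1 q.2.2.1 q.2.2.2)
    (hbc : ∀ q ∈ B, ∀ q' ∈ B, q.2.2.1 = q'.2.2.1 → q.2.2.2 = q'.2.2.2 → q = q')
    (hw1 : ∀ q ∈ B, L ≤ q.2.1) (hw2 : ∀ q ∈ B, 6 * q.2.1 < 7 * L)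
    (hw3 : ∀ q ∈ B, ∀ q' ∈ B, 6 * q'.1 < 6 * q.1 + L)
    (hsg : ∀ q ∈ B, scSign q.1 q.2.1 q.2.2.1 = -1) :
    B.card ≤ 7 := by
  classical
  have spec : ∀ q ∈ B, ∃ A m, q.1 = A + 1 ∧ q.2.1 = m + 1 ∧ 1 ≤ m ∧
      A + m + 2 ≤ q.2.2.1 ∧ q.2.2.1 ≤ A + 2 * m + 1 ∧ A + 2 * m + 1 ≤ W.length ∧
      q.2.2.1 ≤ W.length ∧
      (∀ Q, A ≤ Q → Q + m + 2 ≤ q.2.2.1 → W[Q]? = W[Q + m + 1]?) ∧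
      (∀ Q, q.2.2.1 ≤ Q + m → Q ≤ A + m → W[Q]? = W[Q + m]?) ∧
      W[q.2.2.1 - m - 1]? = some q.2.2.2 := by
    intro q hq
    have hsc := hB q hq
    have h1 : 1 ≤ q.1 := hsc.1
    have h2 : 1 ≤ q.2.1 := hsc.2.1
    have hm : 1 ≤ q.2.1 - 1 := by have := hw1 q hq; omega
    have hsgn := sign_neg_le (hsg q hq)
    rw [show q.1 = (q.1 - 1) + 1 from by omega,
        show q.2.1 = (q.2.1 - 1) + 1 from by omega] at hsc
    obtain ⟨c1, c2, c3, c4, c5, c6, c7⟩ := neg_spec hW hsc (by omega) hm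
    exact ⟨q.1 - 1, q.2.1 - 1, by omega, by omega, hm, c1, c2, c3, c4, c5, c6, c7⟩
  have hdiff : ∀ q ∈ B, ∀ q' ∈ B, q.2.1 + 2 ≤ q'.2.1 → False := by
    intro q hq q' hq' hd
    obtain ⟨A, m, e1, e2, hm1, s1, s2, s3, s4, r1, r2, r3⟩ := spec q hq
    obtain ⟨A', m', e1', e2', hm1', s1', s2', s3', s4', r1', r2', r3'⟩ := spec q' hq'
    have h1 := hw1 q hq
    have h2 := hw2 q' hq'
    have h3 := hw3 q hq q' hq'
    have h4 := hw3 q' hq' q hq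
    refine neg_diff_lem (b := q.2.2.1) (b' := q'.2.2.1) hW hL
      (show L ≤ m + 1 from by omega)
      (show 6 * (m' + 1) < 7 * L from by omega)
      (show 6 * A' < 6 * A + L from by omega) (show 6 * A < 6 * A' + L from by omega)
      (show m + 2 ≤ m' from by omega) s1 s2 s1' s2' s4 s4' ?_ ?_ s3 s3'
    · intro Q hQ1 hQ2 hQ3
      by_cases hlt : Q + m + 1 < q.2.2.1
      · rw [if_pos hlt]; exact r1 Q hQ1 (by omega)
      · rw [if_neg hlt, Nat.add_zero]; exact r2 Q (by omega) hQ2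
    · intro Q hQ1 hQ2 hQ3
      by_cases hlt : Q + m' + 1 < q'.2.2.1
      · rw [if_pos hlt]; exact r1' Q hQ1 (by omega)
      · rw [if_neg hlt, Nat.add_zero]; exact r2' Q (by omega) hQ2
  have pairEq : ∀ q ∈ B, ∀ q' ∈ B, q.2.1 = q'.2.1 → q.2.2.1 = q'.2.2.1 → q = q' := by
    intro q hq q' hq' hl hb
    obtain ⟨A, m, e1, e2, hm1, s1, s2, s3, s4, r1, r2, r3⟩ := spec q hq
    obtain ⟨A', m', e1', e2', hm1', s1', s2', s3', s4', r1', r2', r3'⟩ := spec q' hq'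
    have hmm : m = m' := by omega
    refine hbc q hq q' hq' hb (Option.some.inj ?_)
    rw [← r3, ← r3', hb, hmm]
  have pairChain : ∀ q ∈ B, ∀ q' ∈ B, q.2.1 = q'.2.1 → q.2.2.1 < q'.2.2.1 →
      q'.2.2.1 = q.2.2.1 + 1 ∨ q.2.2.1 + 2 = q.1 + 2 * q.2.1 := by
    intro q hq q' hq' hl hblt
    obtain ⟨A, m, e1, e2, hm1, s1, s2, s3, s4, r1, r2, r3⟩ := spec q hq
    obtain ⟨A', m', e1', e2', hm1', s1', s2', s3', s4', r1', r2', r3'⟩ := spec q' hq'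
    have hmm : m' = m := by omega
    rw [hmm] at r1' s1'
    have h1 := hw1 q hq
    have h3 := hw3 q hq q' hq'
    have hres := neg_same_lem hW hL (show L ≤ m + 1 from by omega)
      (show 6 * A' < 6 * A + L from by omega) hblt s1 s2 s1' s4' r2 r1'
    rcases hres with h | h
    · exact Or.inl (by omega)
    · exact Or.inr (by omega)
  have pairEdge : ∀ q ∈ B, ∀ q' ∈ B, q.2.1 = q'.2.1 →
      q.2.2.1 + 2 = q.1 + 2 * q.2.1 → q'.2.2.1 + 2 = q'.1 + 2 * q'.2.1 → q = q' := by
    intro q hq q' hq' hl he he'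
    rcases eq_or_ne q.2.2.1 q'.2.2.1 with hb | hb
    · exact pairEq q hq q' hq' hl hb
    exfalso
    obtain ⟨A, m, e1, e2, hm1, s1, s2, s3, s4, r1, r2, r3⟩ := spec q hq
    obtain ⟨A', m', e1', e2', hm1', s1', s2', s3', s4', r1', r2', r3'⟩ := spec q' hq'
    have hmm : m' = m := by omega
    rw [hmm] at r1'
    rcases lt_or_gt_of_ne (show A ≠ A' from by omega) with h | h
    · exact edge_pair_lem hW hL (show L ≤ m + 1 from by have := hw1 q hq; omega)
        (show 6 * A' < 6 * A + L from by have := hw3 q hq q' hq'; omega) h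
        (fun Q hQ1 hQ2 => r1 Q hQ1 (by omega))
        (fun Q hQ1 hQ2 => r1' Q hQ1 (by omega))
        (by omega)
    · exact edge_pair_lem hW hL (show L ≤ m + 1 from by have := hw1 q hq; omega)
        (show 6 * A < 6 * A' + L from by have := hw3 q' hq' q hq; omega) h
        (fun Q hQ1 hQ2 => r1' Q hQ1 (by omega))
        (fun Q hQ1 hQ2 => r1 Q hQ1 (by omega))
        (by omega)
  have fiber : ∀ l0, (B.filter (fun q => q.2.1 = l0)).card ≤ 3 := by
    intro l0
    have hE : ((B.filter (fun q => q.2.1 = l0)).filter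
        (fun q => q.2.2.1 + 2 = q.1 + 2 * q.2.1)).card ≤ 1 := by
      rw [Finset.card_le_one]
      intro q hq q' hq'
      rw [Finset.mem_filter, Finset.mem_filter] at hq hq'
      exact pairEdge q hq.1.1 q' hq'.1.1 (by rw [hq.1.2, hq'.1.2]) hq.2 hq'.2
    have hN : ((B.filter (fun q => q.2.1 = l0)).filter
        (fun q => ¬(q.2.2.1 + 2 = q.1 + 2 * q.2.1))).card ≤ 2 := by
      by_contra hcon
      push_neg at hcon
      obtain ⟨q1, q2, q3, hq1, hq2, hq3, n12, n13, n23⟩ :=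
        Finset.two_lt_card_iff.1 hcon
      rw [Finset.mem_filter, Finset.mem_filter] at hq1 hq2 hq3
      have key : ∀ qa, qa ∈ B → ∀ qb, qb ∈ B → qa.2.1 = l0 → qb.2.1 = l0 →
          ¬(qa.2.2.1 + 2 = qa.1 + 2 * qa.2.1) → qa.2.2.1 < qb.2.2.1 →
          qb.2.2.1 = qa.2.2.1 + 1 := by
        intro qa hqa qb hqb hla hlb hea hlt
        exact (pairChain qa hqa qb hqb (by rw [hla, hlb]) hlt).resolve_right hea
      have d12 : q1.2.2.1 ≠ q2.2.2.1 := fun h =>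
        n12 (pairEq q1 hq1.1.1 q2 hq2.1.1 (by rw [hq1.1.2, hq2.1.2]) h)
      have d13 : q1.2.2.1 ≠ q3.2.2.1 := fun h =>
        n13 (pairEq q1 hq1.1.1 q3 hq3.1.1 (by rw [hq1.1.2, hq3.1.2]) h)
      have d23 : q2.2.2.1 ≠ q3.2.2.1 := fun h =>
        n23 (pairEq q2 hq2.1.1 q3 hq3.1.1 (by rw [hq2.1.2, hq3.1.2]) h)
      have K12 : q2.2.2.1 = q1.2.2.1 + 1 ∨ q1.2.2.1 = q2.2.2.1 + 1 := by
        rcases lt_or_gt_of_ne d12 with h | h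
        · exact Or.inl (key q1 hq1.1.1 q2 hq2.1.1 hq1.1.2 hq2.1.2 hq1.2 h)
        · exact Or.inr (key q2 hq2.1.1 q1 hq1.1.1 hq2.1.2 hq1.1.2 hq2.2 h)
      have K13 : q3.2.2.1 = q1.2.2.1 + 1 ∨ q1.2.2.1 = q3.2.2.1 + 1 := by
        rcases lt_or_gt_of_ne d13 with h | h
        · exact Or.inl (key q1 hq1.1.1 q3 hq3.1.1 hq1.1.2 hq3.1.2 hq1.2 h)
        · exact Or.inr (key q3 hq3.1.1 q1 hq1.1.1 hq3.1.2 hq1.1.2 hq3.2 h)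
      have K23 : q3.2.2.1 = q2.2.2.1 + 1 ∨ q2.2.2.1 = q3.2.2.1 + 1 := by
        rcases lt_or_gt_of_ne d23 with h | h
        · exact Or.inl (key q2 hq2.1.1 q3 hq3.1.1 hq2.1.2 hq3.1.2 hq2.2 h)
        · exact Or.inr (key q3 hq3.1.1 q2 hq2.1.1 hq3.1.2 hq2.1.2 hq3.2 h)
      exact three_chain d12 d13 d23 K12 K13 K23
    have hsub : B.filter (fun q => q.2.1 = l0) ⊆
        ((B.filter (fun q => q.2.1 = l0)).filter
          (fun q => q.2.2.1 + 2 = q.1 + 2 * q.2.1)) ∪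
        ((B.filter (fun q => q.2.1 = l0)).filter
          (fun q => ¬(q.2.2.1 + 2 = q.1 + 2 * q.2.1))) := by
      intro q hq
      have hq2 := Finset.mem_filter.1 hq
      simp only [Finset.mem_union, Finset.mem_filter]
      by_cases he : q.2.2.1 + 2 = q.1 + 2 * q.2.1
      · exact Or.inl ⟨hq2, he⟩
      · exact Or.inr ⟨hq2, he⟩
    have hcu := Finset.card_union_le
      ((B.filter (fun q => q.2.1 = l0)).filter (fun q => q.2.2.1 + 2 = q.1 + 2 * q.2.1))
      ((B.filter (fun q => q.2.1 = l0)).filter (fun q => ¬(q.2.2.1 + 2 = q.1 + 2 * q.2.1)))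
    have hcs := Finset.card_le_card hsub
    omega
  rcases Finset.eq_empty_or_nonempty B with hBe | hBne
  · simp [hBe]
  obtain ⟨q0, hq0, hq0min⟩ := Finset.exists_min_image B (fun q => q.2.1) hBne
  have hmem : ∀ q ∈ B, q.2.1 = q0.2.1 ∨ q.2.1 = q0.2.1 + 1 := by
    intro q hq
    have h1 := hq0min q hq
    have h2 : ¬(q0.2.1 + 2 ≤ q.2.1) := fun h => hdiff q0 hq0 q hq h
    omega
  have hsub : B ⊆ (B.filter (fun q => q.2.1 = q0.2.1)) ∪
      (B.filter (fun q => q.2.1 = q0.2.1 + 1)) := by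
    intro q hq
    rw [Finset.mem_union, Finset.mem_filter, Finset.mem_filter]
    rcases hmem q hq with h | h
    · exact Or.inl ⟨hq, h⟩
    · exact Or.inr ⟨hq, h⟩
  have hcu := Finset.card_union_le (B.filter (fun q => q.2.1 = q0.2.1))
    (B.filter (fun q => q.2.1 = q0.2.1 + 1))
  have hcs := Finset.card_le_card hsub
  have f1 := fiber q0.2.1
  have f2 := fiber (q0.2.1 + 1)
  omega

end CSCaux

/-- In an `n`-letter square-free word, a family of square-completing quadruples, no two of
which share the same pair `(b, c)`, all of the same sign, with length parameters in
`[L, 7L/6)` for some `L ≥ 300` and starting indices in `[x, x + L/6)`, has at most 7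
elements. -/
theorem count_square_completing_small_window {α : Type*} (W : List α) (n : ℕ)
    (hn : W.length = n) (hW : SquareFree W)
    (L : ℕ) (hL : 300 ≤ L) (x : ℤ)
    (B : Finset (ℕ × ℕ × ℕ × α))
    (hB : ∀ q ∈ B, SquareCompleting W q.1 q.2.1 q.2.2.1 q.2.2.2)
    (hbc : ∀ q ∈ B, ∀ q' ∈ B, q.2.2.1 = q'.2.2.1 → q.2.2.2 = q'.2.2.2 → q = q')
    (hlen : ∀ q ∈ B, L ≤ q.2.1 ∧ (q.2.1 : ℝ) < 7 * L / 6)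
    (hstart : ∀ q ∈ B, (x : ℝ) ≤ (q.1 : ℝ) ∧ (q.1 : ℝ) < (x : ℝ) + L / 6)
    (hsign : (∀ q ∈ B, scSign q.1 q.2.1 q.2.2.1 = 1) ∨
             (∀ q ∈ B, scSign q.1 q.2.1 q.2.2.1 = -1)) :
    B.card ≤ 7 := by
  have hw1 : ∀ q ∈ B, L ≤ q.2.1 := fun q hq => (hlen q hq).1
  have hw2 : ∀ q ∈ B, 6 * q.2.1 < 7 * L := by
    intro q hq
    have h := (hlen q hq).2
    have h2 : ((6 * q.2.1 : ℕ) : ℝ) < ((7 * L : ℕ) : ℝ) := by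
      push_cast
      linarith
    exact_mod_cast h2
  have hw3 : ∀ q ∈ B, ∀ q' ∈ B, 6 * q'.1 < 6 * q.1 + L := by
    intro q hq q' hq'
    have h1 := (hstart q hq).1
    have h2 := (hstart q' hq').2
    have h3 : ((6 * q'.1 : ℕ) : ℝ) < ((6 * q.1 + L : ℕ) : ℝ) := by
      push_cast
      linarith
    exact_mod_cast h3
  rcases hsign with hsg | hsg
  · exact CSCaux.main_pos W hW L hL B hB hbc hw1 hw2 hw3 hsg
  · exact CSCaux.main_neg W hW L hL B hB hbc hw1 hw2 hw3 hsg
end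

section
/- Let W be an n-letter square-free word and let 𝒜 be a set of square-completing quadruples (a, ℓ, b, c) in W such that no two elements of 𝒜 share the same pair (b, c). For an integer ℓ ≥ 2, let 𝒜_ℓ denote the set of quadruples in 𝒜 whose length parameter equals ℓ. Then for any integer L ≥ 300, the sum over ℓ with L ≤ ℓ < 7L/6 of |𝒜_ℓ| is at most 84n / L. -/
namespace SCP

variable {α : Type*}

/-- periodicity relation on an index interval -/
def Runs (W : List α) (p s e : ℕ) : Prop := ∀ i, s ≤ i → i < e → W[i]? = W[i + p]?

theorem runs_mono {W : List α} {p s e s' e' : ℕ} (h : Runs W p s e) (h1 : s ≤ s') (h2 : e' ≤ e) :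
    Runs W p s' e' := fun i hi1 hi2 => h i (le_trans h1 hi1) (lt_of_lt_of_le hi2 h2)

theorem no_period {W : List α} (hW : SquareFree W) {s d : ℕ} (hd : 1 ≤ d)
    (hn : s + 2 * d ≤ W.length) (hp : ∀ i, s ≤ i → i < s + d → W[i]? = W[i + d]?) : False := by
  have hXl : ((W.drop s).take d).length = d := by
    simp only [List.length_take, List.length_drop]
    omega
  have hY : (W.drop s).take (2 * d) = ((W.drop s).take d) ++ ((W.drop s).take d) := by
    apply List.ext_getElem?
    intro k
    by_cases h1 : k < d
    · rw [List.getElem?_take, if_pos (by omega), List.getElem?_drop,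
        List.getElem?_append, if_pos (by omega), List.getElem?_take, if_pos h1,
        List.getElem?_drop]
    · by_cases h2 : k < 2 * d
      · rw [List.getElem?_take, if_pos h2, List.getElem?_drop,
          List.getElem?_append_right (by omega), hXl,
          List.getElem?_take, if_pos (by omega : k - d < d), List.getElem?_drop]
        have e := hp (s + (k - d)) (by omega) (by omega)
        rw [show s + (k - d) + d = s + k from by omega] at e
        exact e.symm
      · rw [List.getElem?_take, if_neg h2]
        symm
        apply List.getElem?_eq_none
        simp only [List.length_append, hXl]
        omega
  have hinf : (((W.drop s).take d) ++ ((W.drop s).take d)) <:+: W := by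
    refine ⟨W.take s, (W.drop s).drop (2 * d), ?_⟩
    rw [← hY, List.append_assoc, List.take_append_drop, List.take_append_drop]
  exact hW _ (by intro hnil; rw [hnil] at hXl; simp at hXl; omega) hinf

theorem eq_adjacent {W : List α} (hW : SquareFree W) {i : ℕ} (e : W[i]? = W[i + 1]?)
    (hle : i + 2 ≤ W.length) : False :=
  no_period hW (s := i) (d := 1) le_rfl (by omega)
    (fun j hj1 hj2 => by
      have hj : j = i := by omega
      subst hj
      exact e)

theorem ins_lt {W : List α} {b : ℕ} {c : α} (hb : b ≤ W.length) {j : ℕ} (hj : j < b) :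
    (W.insertIdx b c)[j]? = W[j]? := by
  have hjl : j < W.length := lt_of_lt_of_le hj hb
  rw [List.getElem?_eq_getElem hjl,
    List.getElem?_eq_getElem (by rw [List.length_insertIdx_of_le_length hb]; omega)]
  exact congrArg some (List.getElem_insertIdx_of_lt hj _)

theorem ins_self {W : List α} {b : ℕ} {c : α} (hb : b ≤ W.length) :
    (W.insertIdx b c)[b]? = some c := by
  rw [List.getElem?_eq_getElem (by rw [List.length_insertIdx_of_le_length hb]; omega)]
  exact congrArg some (List.getElem_insertIdx_self _)

theorem ins_gt {W : List α} {b : ℕ} {c : α} (hb : b ≤ W.length) (k : ℕ) :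
    (W.insertIdx b c)[b + k + 1]? = W[b + k]? := by
  rcases lt_or_ge (b + k) W.length with h | h
  · rw [List.getElem?_eq_getElem h,
      List.getElem?_eq_getElem (by rw [List.length_insertIdx_of_le_length hb]; omega)]
    exact congrArg some (List.getElem_insertIdx_of_gt (by omega) _)
  · have hlen : (W.insertIdx b c).length = W.length + 1 := List.length_insertIdx_of_le_length hb c
    rw [List.getElem?_eq_none (by omega), List.getElem?_eq_none (by omega)]

theorem sc_struct {W : List α} (hW : SquareFree W) {A0 ℓ b : ℕ} {c : α}
    (h : SquareCompleting W (A0 + 1) ℓ b c) (hl : 2 ≤ ℓ) :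
    A0 + 2 * ℓ ≤ W.length + 1 ∧ b ≤ W.length ∧
    ∃ z, A0 ≤ z ∧
      ((z = b ∧ z + 2 ≤ A0 + ℓ ∧ Runs W (ℓ - 1) A0 z ∧ Runs W ℓ z (A0 + ℓ - 1) ∧
          W[z + ℓ - 1]? = some c)
      ∨ (b = z + ℓ ∧ A0 + 1 ≤ z ∧ z + 1 ≤ A0 + ℓ ∧ Runs W ℓ A0 z ∧
          Runs W (ℓ - 1) (z + 1) (A0 + ℓ) ∧ W[z]? = some c)) := by
  obtain ⟨-, -, hab, hbn, hlen, heq⟩ := h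
  have hA0b : A0 ≤ b := by omega
  have hlen' : A0 + 2 * ℓ ≤ W.length + 1 := by omega
  refine ⟨hlen', hbn, ?_⟩
  have e1 : factor (W.insertIdx b c) (A0 + 1) (A0 + 1 + ℓ) =
      ((W.insertIdx b c).drop A0).take ℓ := by
    simp only [factor]
    rw [show A0 + 1 - 1 = A0 from by omega, show A0 + 1 + ℓ - (A0 + 1) = ℓ from by omega]
  have e2 : factor (W.insertIdx b c) (A0 + 1 + ℓ) (A0 + 1 + 2 * ℓ) =
      ((W.insertIdx b c).drop (A0 + ℓ)).take ℓ := by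
    simp only [factor]
    rw [show A0 + 1 + ℓ - 1 = A0 + ℓ from by omega,
      show A0 + 1 + 2 * ℓ - (A0 + 1 + ℓ) = ℓ from by omega]
  rw [e1, e2] at heq
  have base : ∀ k, k < ℓ → (W.insertIdx b c)[A0 + k]? = (W.insertIdx b c)[A0 + ℓ + k]? := by
    intro k hk
    have h1 := congrArg (fun l => l[k]?) heq
    rw [List.getElem?_take, if_pos hk, List.getElem?_drop,
      List.getElem?_take, if_pos hk, List.getElem?_drop] at h1
    exact h1
  rcases lt_or_ge b (A0 + ℓ) with hbp | hbm
  · -- sign + : insertion in the first half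
    refine ⟨b, hA0b, Or.inl ⟨rfl, ?_, ?_, ?_, ?_⟩⟩
    case refine_2 =>
      -- left run: period ℓ-1 on [A0, b)
      intro i hi1 hi2
      have e := base (i - A0) (by omega)
      rw [show A0 + (i - A0) = i from by omega] at e
      rw [ins_lt hbn hi2] at e
      rw [show A0 + ℓ + (i - A0) = b + (i + ℓ - 1 - b) + 1 from by omega] at e
      rw [ins_gt hbn] at e
      rw [show b + (i + ℓ - 1 - b) = i + (ℓ - 1) from by omega] at e
      exact e
    case refine_3 =>
      -- right run: period ℓ on [b, A0+ℓ-1)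
      intro i hi1 hi2
      have e := base (i + 1 - A0) (by omega)
      rw [show A0 + (i + 1 - A0) = b + (i - b) + 1 from by omega, ins_gt hbn,
        show b + (i - b) = i from by omega] at e
      rw [show A0 + ℓ + (i + 1 - A0) = b + (i + ℓ - b) + 1 from by omega, ins_gt hbn,
        show b + (i + ℓ - b) = i + ℓ from by omega] at e
      exact e
    case refine_4 =>
      -- middle: the inserted letter
      have e := base (b - A0) (by omega)
      rw [show A0 + (b - A0) = b from by omega, ins_self hbn] at e
      rw [show A0 + ℓ + (b - A0) = b + (ℓ - 1) + 1 from by omega, ins_gt hbn] at e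
      rw [show b + ℓ - 1 = b + (ℓ - 1) from by omega]
      exact e.symm
    case refine_1 =>
      -- self-constraint b + 2 ≤ A0 + ℓ
      by_contra hc
      push_neg at hc
      have hb' : b = A0 + ℓ - 1 := by omega
      refine no_period hW (s := A0) (d := ℓ - 1) (by omega) (by omega) ?_
      intro i hi1 hi2
      -- reuse left run computation
      have e := base (i - A0) (by omega)
      rw [show A0 + (i - A0) = i from by omega] at e
      rw [ins_lt hbn (by omega)] at e
      rw [show A0 + ℓ + (i - A0) = b + (i + ℓ - 1 - b) + 1 from by omega] at e
      rw [ins_gt hbn] at e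
      rw [show b + (i + ℓ - 1 - b) = i + (ℓ - 1) from by omega] at e
      exact e
  · -- sign - : insertion in or after the second half
    rcases le_or_gt (A0 + 2 * ℓ) b with hfar | hnear
    · -- impossible: full period ℓ square
      exfalso
      refine no_period hW (s := A0) (d := ℓ) (by omega) (by omega) ?_
      intro i hi1 hi2
      have e := base (i - A0) (by omega)
      rw [show A0 + (i - A0) = i from by omega, ins_lt hbn (by omega)] at e
      rw [show A0 + ℓ + (i - A0) = i + ℓ from by omega, ins_lt hbn (by omega)] at e
      exact e
    · refine ⟨b - ℓ, by omega, Or.inr ⟨by omega, ?_, by omega, ?_, ?_, ?_⟩⟩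
      case refine_2 =>
        -- left run: period ℓ on [A0, b-ℓ)
        intro i hi1 hi2
        have e := base (i - A0) (by omega)
        rw [show A0 + (i - A0) = i from by omega, ins_lt hbn (by omega)] at e
        rw [show A0 + ℓ + (i - A0) = i + ℓ from by omega, ins_lt hbn (by omega)] at e
        exact e
      case refine_3 =>
        -- right run: period ℓ-1 on [b-ℓ+1, A0+ℓ)
        intro i hi1 hi2
        have e := base (i - A0) (by omega)
        rw [show A0 + (i - A0) = i from by omega, ins_lt hbn (by omega)] at e
        rw [show A0 + ℓ + (i - A0) = b + (i + ℓ - 1 - b) + 1 from by omega, ins_gt hbn,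
          show b + (i + ℓ - 1 - b) = i + (ℓ - 1) from by omega] at e
        exact e
      case refine_4 =>
        -- middle
        have e := base (b - ℓ - A0) (by omega)
        rw [show A0 + (b - ℓ - A0) = b - ℓ from by omega, ins_lt hbn (by omega)] at e
        rw [show A0 + ℓ + (b - ℓ - A0) = b from by omega, ins_self hbn] at e
        exact e
      case refine_1 =>
        -- self-constraint A0 + 1 ≤ b - ℓ
        by_contra hc
        push_neg at hc
        have hz : b = A0 + ℓ := by omega
        refine no_period hW (s := A0 + 1) (d := ℓ - 1) (by omega) (by omega) ?_
        intro i hi1 hi2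
        have e := base (i - A0) (by omega)
        rw [show A0 + (i - A0) = i from by omega, ins_lt hbn (by omega)] at e
        rw [show A0 + ℓ + (i - A0) = b + (i + ℓ - 1 - b) + 1 from by omega, ins_gt hbn,
          show b + (i + ℓ - 1 - b) = i + (ℓ - 1) from by omega] at e
        exact e


/-- Two sign-plus quadruples with the same `ℓ` and overlapping squares have the same cut. -/
theorem K1p_aux {W : List α} (hW : SquareFree W) {A A' ℓ t t' : ℕ} (hl : 2 ≤ ℓ)
    (hAA : A ≤ A') (hov : A' + 2 ≤ A + ℓ)
    (hAt : A ≤ t) (ht2 : t + 2 ≤ A + ℓ) (hA't : A' ≤ t') (ht'2 : t' + 2 ≤ A' + ℓ)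
    (hn : A + 2 * ℓ ≤ W.length + 1) (hn' : A' + 2 * ℓ ≤ W.length + 1)
    (r1 : Runs W (ℓ - 1) A t) (r2 : Runs W ℓ t (A + ℓ - 1))
    (r1' : Runs W (ℓ - 1) A' t') (r2' : Runs W ℓ t' (A' + ℓ - 1)) : t = t' := by
  have sq : ∀ i, W[i]? = W[i + ℓ]? → W[i]? = W[i + (ℓ - 1)]? → i + ℓ + 1 ≤ W.length → False := by
    intro i e1 e2 hle
    have e3 := e2.symm.trans e1
    rw [show i + ℓ = i + (ℓ - 1) + 1 from by omega] at e3
    exact eq_adjacent hW e3 (by omega)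
  have step1 : t ≤ t' := by
    by_contra hc
    push_neg at hc
    exact sq t' (r2' t' le_rfl (by omega)) (r1 t' (by omega) hc) (by omega)
  have step2 : t' ≤ t ∨ t' ≤ A' := by
    by_contra hc
    push_neg at hc
    rcases le_total A' t with hca | hca
    · exact sq t (r2 t le_rfl (by omega)) (r1' t hca hc.1) (by omega)
    · exact sq A' (r2 A' hca (by omega)) (r1' A' le_rfl hc.2) (by omega)
  rcases step2 with h1 | h1
  · omega
  · -- t' = A' and t ≤ A'
    have ht'A : t' = A' := by omega
    have hge : A' ≤ t := by
      by_contra hc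
      push_neg at hc
      refine no_period hW (s := t) (d := ℓ) (by omega) (by omega) ?_
      intro i hi1 hi2
      rcases lt_or_ge i (A + ℓ - 1) with hh | hh
      · exact r2 i hi1 hh
      · exact r2' i (by omega) (by omega)
    omega

/-- Two sign-minus quadruples with the same `ℓ` and overlapping squares have the same gap. -/
theorem K1m_aux {W : List α} (hW : SquareFree W) {A A' ℓ g g' : ℕ} (hl : 2 ≤ ℓ)
    (hAA : A ≤ A') (hov : A' + 2 ≤ A + ℓ)
    (hg1 : A + 1 ≤ g) (hg2 : g + 1 ≤ A + ℓ) (hg1' : A' + 1 ≤ g') (hg2' : g' + 1 ≤ A' + ℓ)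
    (hn : A + 2 * ℓ ≤ W.length + 1) (hn' : A' + 2 * ℓ ≤ W.length + 1)
    (r1 : Runs W ℓ A g) (r2 : Runs W (ℓ - 1) (g + 1) (A + ℓ))
    (r1' : Runs W ℓ A' g') (r2' : Runs W (ℓ - 1) (g' + 1) (A' + ℓ)) : g = g' := by
  have step1 : g ≤ g' := by
    by_contra hc
    push_neg at hc
    rcases le_or_gt (g' + 2) (A' + ℓ) with hs | hs
    · have e1 := r1 g' (by omega) hc
      have e2 := r2' (g' + 1) le_rfl (by omega)
      rw [show g' + 1 + (ℓ - 1) = g' + ℓ from by omega] at e2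
      exact eq_adjacent hW (e1.trans e2.symm) (by omega)
    · omega
  rcases eq_or_lt_of_le step1 with he | hlt
  · exact he
  exfalso
  rcases le_total A' g with hc1 | hc1
  · rcases le_or_gt (g + 2) (A + ℓ) with hc2 | hc2
    · have e1 := r1' g hc1 hlt
      have e2 := r2 (g + 1) le_rfl (by omega)
      rw [show g + 1 + (ℓ - 1) = g + ℓ from by omega] at e2
      exact eq_adjacent hW (e1.trans e2.symm) (by omega)
    · -- g = A + ℓ - 1 and g' ≥ A + ℓ
      have hgA : g = A + ℓ - 1 := by omega
      have hA'A : A + 1 ≤ A' := by omega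
      refine no_period hW (s := A) (d := ℓ) (by omega) (by omega) ?_
      intro i hi1 hi2
      rcases lt_or_ge i g with hh | hh
      · exact r1 i hi1 hh
      · exact r1' i (by omega) (by omega)
  · have e1 := r1' A' le_rfl (by omega)
    have e2 := r2 (A' + 1) (by omega) (by omega)
    rw [show A' + 1 + (ℓ - 1) = A' + ℓ from by omega] at e2
    exact eq_adjacent hW (e1.trans e2.symm) (by omega)

/-- Two square-completing quadruples with the same `ℓ`, the same sign, and squares
containing a common position `x` have the same `(b, c)`. -/
theorem K1 {W : List α} (hW : SquareFree W) {A1 A1' ℓ b b' : ℕ} {c c' : α}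
    (h : SquareCompleting W (A1 + 1) ℓ b c) (h' : SquareCompleting W (A1' + 1) ℓ b' c')
    (hl : 2 ≤ ℓ) {x : ℕ}
    (hx1 : A1 ≤ x) (hx2 : x + 2 ≤ A1 + ℓ) (hx1' : A1' ≤ x) (hx2' : x + 2 ≤ A1' + ℓ)
    (hsgn : (b + 2 ≤ A1 + 1 + ℓ) ↔ (b' + 2 ≤ A1' + 1 + ℓ)) : b = b' ∧ c = c' := by
  obtain ⟨hn1, hb1, z, hz0, hcase⟩ := sc_struct hW h hl
  obtain ⟨hn1', hb1', z', hz0', hcase'⟩ := sc_struct hW h' hl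
  rcases hcase with ⟨hzb, hz2, r1, r2, hc⟩ | ⟨hzb, hz1, hz2, r1, r2, hc⟩ <;>
    rcases hcase' with ⟨hzb', hz2', r1', r2', hc'⟩ | ⟨hzb', hz1', hz2', r1', r2', hc'⟩
  · -- both sign +
    have hzz : z = z' := by
      rcases le_total A1 A1' with hAA | hAA
      · exact K1p_aux hW hl hAA (by omega) hz0 hz2 hz0' hz2' hn1 hn1' r1 r2 r1' r2'
      · exact (K1p_aux hW hl hAA (by omega) hz0' hz2' hz0 hz2 hn1' hn1 r1' r2' r1 r2).symm
    refine ⟨by omega, ?_⟩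
    rw [← hzz] at hc'
    exact Option.some.inj (hc.symm.trans hc')
  · -- mixed: contradiction with sign
    exfalso
    have h1 := hsgn.mp (by omega)
    omega
  · exfalso
    have h1 := hsgn.mpr (by omega)
    omega
  · -- both sign -
    have hzz : z = z' := by
      rcases le_total A1 A1' with hAA | hAA
      · exact K1m_aux hW hl hAA (by omega) hz1 hz2 hz1' hz2' hn1 hn1' r1 r2 r1' r2'
      · exact (K1m_aux hW hl hAA (by omega) hz1' hz2' hz1 hz2 hn1' hn1 r1' r2' r1 r2).symm
    refine ⟨by omega, ?_⟩
    rw [← hzz] at hc'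
    exact Option.some.inj (hc.symm.trans hc')

/-- A subinterval of length `2D` of `[y, y+h]` avoiding the cuts `z, z'` and lying on a
single side of each. -/
theorem find_u {D h : ℕ} (hD : 1 ≤ D) (hh : 6 * D + 2 ≤ h) (y z z' : ℕ) :
    ∃ u, y ≤ u ∧ u + 2 * D ≤ y + h + 1 ∧ (z < u ∨ u + 2 * D ≤ z) ∧
      (z' < u ∨ u + 2 * D ≤ z') := by
  by_cases c1 : z < y ∨ y + 2 * D ≤ z
  · by_cases c2 : z' < y ∨ y + 2 * D ≤ z'
    · exact ⟨y, le_rfl, by omega, c1, c2⟩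
    · push_neg at c2
      by_cases c3 : z < z' + 1 ∨ z' + 1 + 2 * D ≤ z
      · exact ⟨z' + 1, by omega, by omega, c3, Or.inl (by omega)⟩
      · push_neg at c3
        exact ⟨z + 1, by omega, by omega, Or.inl (by omega), Or.inl (by omega)⟩
  · push_neg at c1
    by_cases c2 : z' < z + 1 ∨ z + 1 + 2 * D ≤ z'
    · exact ⟨z + 1, by omega, by omega, Or.inl (by omega), c2⟩
    · push_neg at c2
      exact ⟨z' + 1, by omega, by omega, Or.inl (by omega), Or.inl (by omega)⟩

/-- Two quadruples whose lengths differ by at least 2 but at most `(L-26)/12`, and whose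
squares both amply contain a common window `[y, y + (L-2)/2]`, give a square. -/
theorem K2 {W : List α} (hW : SquareFree W) {L A ℓ z pL pR A' ℓ' z' pL' pR' y : ℕ}
    (hL : 300 ≤ L) (hLl : L ≤ ℓ)
    (hll : ℓ + 2 ≤ ℓ') (hgap : ℓ' ≤ ℓ + (L - 26) / 12)
    (hp : pL = ℓ - 1 ∧ pR = ℓ ∨ pL = ℓ ∧ pR = ℓ - 1)
    (hp' : pL' = ℓ' - 1 ∧ pR' = ℓ' ∨ pL' = ℓ' ∧ pR' = ℓ' - 1)
    (rL : Runs W pL A z) (rR : Runs W pR (z + 1) (A + ℓ - 1))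
    (rL' : Runs W pL' A' z') (rR' : Runs W pR' (z' + 1) (A' + ℓ' - 1))
    (hyA : A ≤ y) (hyA' : A' ≤ y)
    (hy : y + (L - 2) / 2 + 2 ≤ A + ℓ) (hy' : y + (L - 2) / 2 + 2 ≤ A' + ℓ')
    (hnA : A + 2 * ℓ ≤ W.length + 1) : False := by
  have hD : 1 ≤ ℓ' - ℓ + 1 := by omega
  have hh : 6 * (ℓ' - ℓ + 1) + 2 ≤ (L - 2) / 2 := by omega
  obtain ⟨u, hu1, hu2, hu3, hu4⟩ := find_u hD hh y z z'
  have run1 : ∃ p, ℓ - 1 ≤ p ∧ p ≤ ℓ ∧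
      ∀ i, u ≤ i → i < u + 2 * (ℓ' - ℓ + 1) → W[i]? = W[i + p]? := by
    rcases hu3 with hz | hz
    · refine ⟨pR, ?_, ?_, fun i hi1 hi2 => rR i (by omega) (by omega)⟩ <;>
        rcases hp with ⟨e1, e2⟩ | ⟨e1, e2⟩ <;> omega
    · refine ⟨pL, ?_, ?_, fun i hi1 hi2 => rL i (by omega) (by omega)⟩ <;>
        rcases hp with ⟨e1, e2⟩ | ⟨e1, e2⟩ <;> omega
  have run2 : ∃ p', ℓ' - 1 ≤ p' ∧ p' ≤ ℓ' ∧
      ∀ i, u ≤ i → i < u + 2 * (ℓ' - ℓ + 1) → W[i]? = W[i + p']? := by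
    rcases hu4 with hz | hz
    · refine ⟨pR', ?_, ?_, fun i hi1 hi2 => rR' i (by omega) (by omega)⟩ <;>
        rcases hp' with ⟨e1, e2⟩ | ⟨e1, e2⟩ <;> omega
    · refine ⟨pL', ?_, ?_, fun i hi1 hi2 => rL' i (by omega) (by omega)⟩ <;>
        rcases hp' with ⟨e1, e2⟩ | ⟨e1, e2⟩ <;> omega
  obtain ⟨p, hp1, hp2, R1⟩ := run1
  obtain ⟨p', hp1', hp2', R2⟩ := run2
  refine no_period hW (s := u) (d := p' - p) (by omega) (by omega) ?_
  intro i hi1 hi2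
  have e1 := R2 i (by omega) (by omega)
  have e2 := R1 (i + (p' - p)) (by omega) (by omega)
  rw [show i + (p' - p) + p = i + p' from by omega] at e2
  rw [e1, ← e2]

/-- A finite set of naturals in `[lo, hi)` in which any two elements differ by at most 1
or by at least `K` has at most `2 * m` elements, when `hi ≤ lo + m * K`. -/
theorem bucket {T : Finset ℕ} {lo hi K m : ℕ} (hK : 1 ≤ K)
    (hsub : ∀ t ∈ T, t ∈ Finset.Ico lo hi)
    (hp : ∀ u ∈ T, ∀ v ∈ T, u + 2 ≤ v → u + K ≤ v)
    (hm : hi ≤ lo + m * K) :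
    T.card ≤ 2 * m := by
  have f2 : ∀ b ∈ T.image (fun t => (t - lo) / K),
      (T.filter (fun t => (t - lo) / K = b)).card ≤ 2 := by
    intro b _
    by_contra hcon
    push_neg at hcon
    have h3 : 2 < (T.filter (fun t => (t - lo) / K = b)).card := by omega
    obtain ⟨u, hu, v, hv, w, hw, huv, huw, hvw⟩ := Finset.two_lt_card.1 h3
    simp only [Finset.mem_filter] at hu hv hw
    have near : ∀ p q, p ∈ T → q ∈ T → (p - lo) / K = b → (q - lo) / K = b →
        ¬ (p + 2 ≤ q) := by
      intro p q hp1 hq1 hp2 hq2 hpq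
      have h1 := hp p hp1 q hq1 hpq
      have d1 := Nat.div_add_mod (p - lo) K
      have d2 := Nat.div_add_mod (q - lo) K
      rw [hp2] at d1
      rw [hq2] at d2
      have m1 : (p - lo) % K < K := Nat.mod_lt _ (by omega)
      have m2 : (q - lo) % K < K := Nat.mod_lt _ (by omega)
      have l1 : lo ≤ p := (Finset.mem_Ico.1 (hsub p hp1)).1
      have l2 : lo ≤ q := (Finset.mem_Ico.1 (hsub q hq1)).1
      omega
    have n1 := near u v hu.1 hv.1 hu.2 hv.2
    have n2 := near v u hv.1 hu.1 hv.2 hu.2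
    have n3 := near u w hu.1 hw.1 hu.2 hw.2
    have n4 := near w u hw.1 hu.1 hw.2 hu.2
    have n5 := near v w hv.1 hw.1 hv.2 hw.2
    have n6 := near w v hw.1 hv.1 hw.2 hv.2
    omega
  have himg : T.image (fun t => (t - lo) / K) ⊆ Finset.range m := by
    intro b hb
    obtain ⟨t, ht, rfl⟩ := Finset.mem_image.1 hb
    have h1 := Finset.mem_Ico.1 (hsub t ht)
    rw [Finset.mem_range]
    rw [Nat.div_lt_iff_lt_mul (by omega)]
    omega
  calc T.card ≤ 2 * (T.image (fun t => (t - lo) / K)).card :=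
        Finset.card_le_mul_card_image _ 2 f2
    _ ≤ 2 * m := by
        have := Finset.card_le_card himg
        rw [Finset.card_range] at this
        omega

/-- At most 24 quadruples of the family have squares containing a given position `x`. -/
theorem cover24 {W : List α} (hW : SquareFree W) {A : Finset (ℕ × ℕ × ℕ × α)}
    (hA : ∀ q ∈ A, SquareCompleting W q.1 q.2.1 q.2.2.1 q.2.2.2)
    (hbc : ∀ q ∈ A, ∀ q' ∈ A, q.2.2.1 = q'.2.2.1 → q.2.2.2 = q'.2.2.2 → q = q')
    {L : ℕ} (hL : 300 ≤ L) (x : ℕ) :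
    (A.filter (fun q => q.2.1 ∈ Finset.Ico L ((7 * L + 5) / 6) ∧
        x ∈ Finset.Ico (q.1 - 1) (q.1 - 1 + q.2.1 - 1))).card ≤ 24 := by
  classical
  set S := A.filter (fun q => q.2.1 ∈ Finset.Ico L ((7 * L + 5) / 6) ∧
        x ∈ Finset.Ico (q.1 - 1) (q.1 - 1 + q.2.1 - 1)) with hSdef
  have hmem : ∀ q ∈ S, SquareCompleting W q.1 q.2.1 q.2.2.1 q.2.2.2 ∧ 1 ≤ q.1 ∧
      L ≤ q.2.1 ∧ q.2.1 < (7 * L + 5) / 6 ∧ q.1 - 1 ≤ x ∧ x + 2 ≤ q.1 - 1 + q.2.1 := by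
    intro q hq
    rw [hSdef, Finset.mem_filter, Finset.mem_Ico, Finset.mem_Ico] at hq
    obtain ⟨hqA, ⟨hI1, hI2⟩, hx1, hx2⟩ := hq
    have h1 := hA q hqA
    exact ⟨h1, h1.1, hI1, hI2, hx1, by omega⟩
  have hSA : ∀ q ∈ S, q ∈ A := fun q hq => (Finset.mem_filter.1 hq).1
  -- uniqueness within a fiber (same ℓ, same sign)
  have uniq : ∀ q ∈ S, ∀ q' ∈ S, q.2.1 = q'.2.1 →
      (decide (q.2.2.1 + 2 ≤ q.1 + q.2.1) = decide (q'.2.2.1 + 2 ≤ q'.1 + q'.2.1)) →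
      q = q' := by
    intro q hq q' hq' hll hsg
    obtain ⟨h1, ha1, hL1, hM1, hxa, hxb⟩ := hmem q hq
    obtain ⟨h1', ha1', hL1', hM1', hxa', hxb'⟩ := hmem q' hq'
    rw [show q.1 = (q.1 - 1) + 1 from by omega] at h1
    rw [show q'.1 = (q'.1 - 1) + 1 from by omega] at h1'
    rw [← hll] at h1'
    rw [decide_eq_decide] at hsg
    have hiff : (q.2.2.1 + 2 ≤ (q.1 - 1) + 1 + q.2.1) ↔
        (q'.2.2.1 + 2 ≤ (q'.1 - 1) + 1 + q.2.1) := by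
      constructor
      · intro hh
        have := hsg.mp (by omega)
        omega
      · intro hh
        have := hsg.mpr (by omega)
        omega
    have hK := K1 hW h1 h1' (by omega) (x := x) (by omega) (by omega) (by omega) (by omega)
      hiff
    exact hbc q (hSA q hq) q' (hSA q' hq') hK.1 hK.2
  -- gap property via K2
  have gap : ∀ q ∈ S, ∀ q' ∈ S, ∀ y : ℕ,
      q.1 - 1 ≤ y → q'.1 - 1 ≤ y →
      y + (L - 2) / 2 + 2 ≤ q.1 - 1 + q.2.1 → y + (L - 2) / 2 + 2 ≤ q'.1 - 1 + q'.2.1 →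
      q.2.1 + 2 ≤ q'.2.1 → q.2.1 + ((L - 26) / 12 + 1) ≤ q'.2.1 := by
    intro q hq q' hq' y hy1 hy2 hy3 hy4 hll
    by_contra hcon
    push_neg at hcon
    obtain ⟨h1, ha1, hL1, hM1, hxa, hxb⟩ := hmem q hq
    obtain ⟨h1', ha1', hL1', hM1', hxa', hxb'⟩ := hmem q' hq'
    rw [show q.1 = (q.1 - 1) + 1 from by omega] at h1
    rw [show q'.1 = (q'.1 - 1) + 1 from by omega] at h1'
    obtain ⟨hn1, hb1, z, hz0, hcase⟩ := sc_struct hW h1 (by omega)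
    obtain ⟨hn1', hb1', z', hz0', hcase'⟩ := sc_struct hW h1' (by omega)
    have runs1 : ∃ pL pR, (pL = q.2.1 - 1 ∧ pR = q.2.1 ∨ pL = q.2.1 ∧ pR = q.2.1 - 1) ∧
        Runs W pL (q.1 - 1) z ∧ Runs W pR (z + 1) (q.1 - 1 + q.2.1 - 1) := by
      rcases hcase with ⟨hzb, hz2, r1, r2, -⟩ | ⟨hzb, hz1, hz2, r1, r2, -⟩
      · exact ⟨q.2.1 - 1, q.2.1, Or.inl ⟨rfl, rfl⟩, r1,
          fun i hi1 hi2 => r2 i (by omega) hi2⟩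
      · exact ⟨q.2.1, q.2.1 - 1, Or.inr ⟨rfl, rfl⟩, r1,
          fun i hi1 hi2 => r2 i hi1 (by omega)⟩
    have runs2 : ∃ pL pR, (pL = q'.2.1 - 1 ∧ pR = q'.2.1 ∨ pL = q'.2.1 ∧ pR = q'.2.1 - 1) ∧
        Runs W pL (q'.1 - 1) z' ∧ Runs W pR (z' + 1) (q'.1 - 1 + q'.2.1 - 1) := by
      rcases hcase' with ⟨hzb, hz2, r1, r2, -⟩ | ⟨hzb, hz1, hz2, r1, r2, -⟩
      · exact ⟨q'.2.1 - 1, q'.2.1, Or.inl ⟨rfl, rfl⟩, r1,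
          fun i hi1 hi2 => r2 i (by omega) hi2⟩
      · exact ⟨q'.2.1, q'.2.1 - 1, Or.inr ⟨rfl, rfl⟩, r1,
          fun i hi1 hi2 => r2 i hi1 (by omega)⟩
    obtain ⟨pL, pR, hpd, rL, rR⟩ := runs1
    obtain ⟨pL', pR', hpd', rL', rR'⟩ := runs2
    exact K2 hW hL hL1 hll (by omega) hpd hpd' rL rR rL' rR' hy1 hy2 hy3 hy4 hn1
  -- side bound
  have side : ∀ (T : Finset (ℕ × ℕ × ℕ × α)) (y : ℕ), T ⊆ S →
      (∀ q ∈ T, q.1 - 1 ≤ y ∧ y + (L - 2) / 2 + 2 ≤ q.1 - 1 + q.2.1) → T.card ≤ 12 := by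
    intro T y hTS hTy
    have f2 : ∀ v ∈ T.image (fun q => q.2.1),
        (T.filter (fun q => q.2.1 = v)).card ≤ 2 := by
      intro v _
      have h2 : ((Finset.univ : Finset Bool)).card = 2 := by simp
      rw [← h2]
      apply Finset.card_le_card_of_injOn
        (fun q => decide (q.2.2.1 + 2 ≤ q.1 + q.2.1))
        (fun a _ => Finset.mem_univ _)
      intro q hq q' hq' hsg
      rw [Finset.mem_coe, Finset.mem_filter] at hq hq'
      exact uniq q (hTS hq.1) q' (hTS hq'.1) (by rw [hq.2, hq'.2]) hsg
    have himg : (T.image (fun q => q.2.1)).card ≤ 6 := by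
      have hb := bucket (T := T.image (fun q => q.2.1)) (lo := L) (hi := (7 * L + 5) / 6)
        (K := (L - 26) / 12 + 1) (m := 3) (by omega) ?_ ?_ (by omega)
      · omega
      · intro t ht
        obtain ⟨q, hq, rfl⟩ := Finset.mem_image.1 ht
        obtain ⟨-, -, hL1, hM1, -, -⟩ := hmem q (hTS hq)
        rw [Finset.mem_Ico]
        exact ⟨hL1, hM1⟩
      · intro u hu v hv huv
        obtain ⟨q, hq, rfl⟩ := Finset.mem_image.1 hu
        obtain ⟨q', hq', rfl⟩ := Finset.mem_image.1 hv
        have := gap q (hTS hq) q' (hTS hq') y (hTy q hq).1 (hTy q' hq').1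
          (hTy q hq).2 (hTy q' hq').2 huv
        omega
    calc T.card ≤ 2 * (T.image (fun q => q.2.1)).card :=
          Finset.card_le_mul_card_image _ 2 f2
      _ ≤ 12 := by omega
  -- split into left-heavy and right-heavy quadruples
  set SL := S.filter (fun q => q.1 - 1 + (L - 2) / 2 ≤ x) with hSL
  set SR := S.filter (fun q => ¬ (q.1 - 1 + (L - 2) / 2 ≤ x)) with hSR
  have hunion : S.card ≤ SL.card + SR.card := by
    have := Finset.card_filter_add_card_filter_not (s := S)
      (p := fun q => q.1 - 1 + (L - 2) / 2 ≤ x)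
    rw [hSL, hSR]
    omega
  have hL12 : SL.card ≤ 12 := by
    apply side SL (x - (L - 2) / 2) (Finset.filter_subset _ _)
    intro q hq
    rw [hSL, Finset.mem_filter] at hq
    obtain ⟨hqS, hlh⟩ := hq
    obtain ⟨-, -, -, -, hxa, hxb⟩ := hmem q hqS
    omega
  have hR12 : SR.card ≤ 12 := by
    apply side SR x (Finset.filter_subset _ _)
    intro q hq
    rw [hSR, Finset.mem_filter] at hq
    obtain ⟨hqS, hlh⟩ := hq
    obtain ⟨-, -, hL1, -, hxa, hxb⟩ := hmem q hqS
    omega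
  omega

end SCP

/-- In an `n`-letter square-free word, for a family `A` of square-completing quadruples, no
two sharing the same pair `(b, c)`, and any `L ≥ 300`, the number of quadruples whose length
parameter `ℓ` satisfies `L ≤ ℓ < 7L/6` is at most `84n / L`.  (Here `(7*L + 5) / 6` is the
least integer strictly greater than every `ℓ < 7L/6`, so the sum below ranges exactly over
the integers `ℓ` with `L ≤ ℓ < 7L/6`.) -/
theorem count_square_completing_seventh_range {α : Type*} (W : List α) (n : ℕ)
    (hn : W.length = n) (hW : SquareFree W)
    (A : Finset (ℕ × ℕ × ℕ × α))
    (hA : ∀ q ∈ A, SquareCompleting W q.1 q.2.1 q.2.2.1 q.2.2.2)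
    (hbc : ∀ q ∈ A, ∀ q' ∈ A, q.2.2.1 = q'.2.2.1 → q.2.2.2 = q'.2.2.2 → q = q')
    (L : ℕ) (hL : 300 ≤ L) :
    ((∑ ℓ ∈ Finset.Ico L ((7 * L + 5) / 6),
        (A.filter (fun q => q.2.1 = ℓ)).card : ℕ) : ℝ) ≤ 84 * n / L := by
  classical
  set B := A.filter (fun q => q.2.1 ∈ Finset.Ico L ((7 * L + 5) / 6)) with hB
  -- Step 1: the sum equals B.card
  have hsum : (∑ ℓ ∈ Finset.Ico L ((7 * L + 5) / 6),
      (A.filter (fun q => q.2.1 = ℓ)).card) = B.card := by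
    have hfib := Finset.card_eq_sum_card_fiberwise
      (f := fun q : ℕ × ℕ × ℕ × α => q.2.1) (s := B)
      (t := Finset.Ico L ((7 * L + 5) / 6))
      (fun q hq => (Finset.mem_filter.1 hq).2)
    rw [hfib]
    apply Finset.sum_congr rfl
    intro ℓ0 hl0
    congr 1
    rw [hB]
    ext q
    simp only [Finset.mem_filter]
    constructor
    · rintro ⟨h1, h2⟩
      exact ⟨⟨h1, by rw [h2]; exact hl0⟩, h2⟩
    · rintro ⟨⟨h1, h2⟩, h3⟩
      exact ⟨h1, h3⟩
  -- facts about members of B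
  have hBfact : ∀ q ∈ B, 1 ≤ q.1 ∧ L ≤ q.2.1 ∧ q.1 + 2 * q.2.1 ≤ n + 2 := by
    intro q hq
    rw [hB, Finset.mem_filter, Finset.mem_Ico] at hq
    have h1 := hA q hq.1
    refine ⟨h1.1, hq.2.1, ?_⟩
    have := h1.2.2.2.2.1
    omega
  -- Step 2: double counting
  have hcount : B.card * (L - 1) ≤ n * 24 := by
    have step1 : B.card * (L - 1) ≤
        ∑ q ∈ B, (Finset.Ico (q.1 - 1) (q.1 - 1 + q.2.1 - 1)).card := by
      have := Finset.card_nsmul_le_sum B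
        (fun q => (Finset.Ico (q.1 - 1) (q.1 - 1 + q.2.1 - 1)).card) (L - 1) ?_
      · rwa [smul_eq_mul] at this
      · intro q hq
        obtain ⟨h1, h2, h3⟩ := hBfact q hq
        show L - 1 ≤ (Finset.Ico (q.1 - 1) (q.1 - 1 + q.2.1 - 1)).card
        rw [Nat.card_Ico]
        omega
    have step2 : ∑ q ∈ B, (Finset.Ico (q.1 - 1) (q.1 - 1 + q.2.1 - 1)).card =
        ∑ i ∈ Finset.range n,
          (B.filter (fun q => i ∈ Finset.Ico (q.1 - 1) (q.1 - 1 + q.2.1 - 1))).card := by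
      have e1 : ∀ q ∈ B, (Finset.Ico (q.1 - 1) (q.1 - 1 + q.2.1 - 1)).card =
          ∑ i ∈ Finset.range n,
            (if i ∈ Finset.Ico (q.1 - 1) (q.1 - 1 + q.2.1 - 1) then 1 else 0) := by
        intro q hq
        obtain ⟨h1, h2, h3⟩ := hBfact q hq
        rw [Finset.sum_ite_mem, Finset.sum_const, smul_eq_mul, mul_one,
          Finset.inter_eq_right.2 ?_]
        intro i hi
        rw [Finset.mem_Ico] at hi
        rw [Finset.mem_range]
        omega
      rw [Finset.sum_congr rfl e1, Finset.sum_comm]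
      apply Finset.sum_congr rfl
      intro i _
      rw [Finset.card_filter]
    have step3 : ∑ i ∈ Finset.range n,
        (B.filter (fun q => i ∈ Finset.Ico (q.1 - 1) (q.1 - 1 + q.2.1 - 1))).card ≤
        n * 24 := by
      have := Finset.sum_le_card_nsmul (Finset.range n)
        (fun i => (B.filter (fun q => i ∈ Finset.Ico (q.1 - 1) (q.1 - 1 + q.2.1 - 1))).card)
        24 ?_
      · rwa [Finset.card_range, smul_eq_mul] at this
      · intro i _
        have hcov := SCP.cover24 hW hA hbc hL i
        show ((A.filter (fun q => q.2.1 ∈ Finset.Ico L ((7 * L + 5) / 6))).filter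
          (fun q => i ∈ Finset.Ico (q.1 - 1) (q.1 - 1 + q.2.1 - 1))).card ≤ 24
        rw [Finset.filter_filter]
        exact hcov
    rw [step2] at step1
    exact le_trans step1 step3
  -- Step 3: conclude
  have h2 : B.card ≤ n * 24 :=
    le_trans (Nat.le_mul_of_pos_right _ (by omega : 0 < L - 1)) hcount
  have h3 : B.card * L ≤ B.card * (L - 1) + B.card := by
    calc B.card * L ≤ B.card * ((L - 1) + 1) :=
          Nat.mul_le_mul_left _ (by omega)
      _ = B.card * (L - 1) + B.card := by rw [Nat.mul_succ]
  have hfin : B.card * L ≤ 84 * n :=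
    le_trans h3 (le_trans (Nat.add_le_add hcount h2) (by omega))
  rw [hsum]
  have hL0 : (0 : ℝ) < (L : ℝ) := by
    have : 0 < L := by omega
    exact_mod_cast this
  rw [le_div_iff₀ hL0]
  exact_mod_cast hfin
end
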